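/- arXiv:1903.06426 — 3 statements merged into one kernel-verified Lean document; each statement's English description precedes it below -/
import Mathlib

section
/- Let n ≥ 3. Let Γ be the graph whose vertices are the complete flags of 𝔽_2^{n−1}, two flags being adjacent iff they differ in exactly one subspace, and let Γ_P be the induced subgraph on the flags all of whose subspaces are partition subspaces. Then for any two complete flags C and D all of whose subspaces are partition subspaces, the shortest-path distance from C to D in Γ_P equals the shortest-path distance from C to D in Γ. -/
/-- The vector `e_i ∈ 𝔽₂ⁿ⁻¹` for `i` among the first `n-1` indices, and `0` for the
last index (`e_n := 0`). -/
def unitVec (n : ℕ) (i : Fin n) : Fin (n - 1) → ZMod 2 :=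
  fun k => if (k : ℕ) = (i : ℕ) then 1 else 0

/-- The subspace of `𝔽₂ⁿ⁻¹` associated to a set partition of `{1, …, n}`. -/
def partSubspace (n : ℕ) (π : Setoid (Fin n)) :
    Submodule (ZMod 2) (Fin (n - 1) → ZMod 2) :=
  Submodule.span (ZMod 2)
    {x | ∃ i j : Fin n, i < j ∧ π.r i j ∧ x = unitVec n i + unitVec n j}

/-- A subspace of `𝔽₂ⁿ⁻¹` is a partition subspace if it comes from a partition. -/
def IsPartitionSubspace (n : ℕ)
    (U : Submodule (ZMod 2) (Fin (n - 1) → ZMod 2)) : Prop :=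
  ∃ π : Setoid (Fin n), U = partSubspace n π

/-- A complete flag in `𝔽₂ⁿ⁻¹`: a chain of subspaces `U₁ ⊂ ⋯ ⊂ U_{n-2}` with
`dim Uₖ = k`. -/
abbrev VFlag (n : ℕ) : Type :=
  {U : Fin (n - 2) → Submodule (ZMod 2) (Fin (n - 1) → ZMod 2) //
    StrictMono U ∧ ∀ k : Fin (n - 2), Module.finrank (ZMod 2) (U k) = (k : ℕ) + 1}

/-- The graph on complete flags of `𝔽₂ⁿ⁻¹`: two flags are adjacent iff they differ
in exactly one subspace. -/
def flagGraph (n : ℕ) : SimpleGraph (VFlag n) where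
  Adj C D := ∃! k : Fin (n - 2), C.1 k ≠ D.1 k
  symm := by
    constructor
    rintro C D ⟨k, hk, hu⟩
    exact ⟨k, Ne.symm hk, fun l hl => hu l (Ne.symm hl)⟩
  loopless := by
    constructor
    rintro C ⟨k, hk, -⟩
    exact hk rfl

namespace PFlag

/-- `g n i j = e_i + e_j`. -/
def g (n : ℕ) (i j : Fin n) : Fin (n - 1) → ZMod 2 := unitVec n i + unitVec n j

lemma g_self (n : ℕ) (i : Fin n) : g n i i = 0 := by
  funext k
  simp only [g, Pi.add_apply, unitVec, Pi.zero_apply]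
  split
  · decide
  · simp

lemma g_comm (n : ℕ) (i j : Fin n) : g n i j = g n j i := by
  simp [g, add_comm]

lemma g_trans (n : ℕ) (i j k : Fin n) : g n i j + g n j k = g n i k := by
  funext l
  simp only [g, Pi.add_apply, unitVec]
  split <;> split <;> split <;> simp_all <;> decide

lemma mem_partSubspace_of_rel (n : ℕ) (π : Setoid (Fin n)) {i j : Fin n}
    (h : π.r i j) : g n i j ∈ partSubspace n π := by
  rcases lt_trichotomy i j with hij | hij | hij
  · exact Submodule.subset_span ⟨i, j, hij, h, rfl⟩
  · subst hij; rw [g_self]; exact (partSubspace n π).zero_mem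
  · rw [g_comm]
    exact Submodule.subset_span ⟨j, i, hij, π.symm' h, rfl⟩

lemma partSubspace_le (n : ℕ) {π σ : Setoid (Fin n)} (h : π ≤ σ) :
    partSubspace n π ≤ partSubspace n σ := by
  apply Submodule.span_le.2
  rintro x ⟨i, j, hij, hrel, rfl⟩
  exact mem_partSubspace_of_rel n σ (h hrel)

lemma partSubspace_sup (n : ℕ) (π σ : Setoid (Fin n)) :
    partSubspace n π ⊔ partSubspace n σ = partSubspace n (π ⊔ σ) := by
  apply le_antisymm
  · exact sup_le (partSubspace_le n le_sup_left) (partSubspace_le n le_sup_right)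
  · apply Submodule.span_le.2
    rintro x ⟨i, j, hij, hrel, rfl⟩
    rw [Setoid.sup_eq_eqvGen] at hrel
    have key : ∀ a b : Fin n, Relation.EqvGen (fun x y => π x y ∨ σ x y) a b →
        g n a b ∈ partSubspace n π ⊔ partSubspace n σ := by
      intro a b hab
      induction hab with
      | rel a b h =>
        rcases h with h | h
        · exact Submodule.mem_sup_left (mem_partSubspace_of_rel n π h)
        · exact Submodule.mem_sup_right (mem_partSubspace_of_rel n σ h)
      | refl a => rw [g_self]; exact Submodule.zero_mem _
      | symm a b _ ih => rwa [g_comm]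
      | trans a b c _ _ ih1 ih2 =>
        rw [← g_trans n a b c]; exact Submodule.add_mem _ ih1 ih2
    exact key i j hrel

lemma IsPartitionSubspace.sup {n : ℕ} {U W : Submodule (ZMod 2) (Fin (n-1) → ZMod 2)}
    (hU : IsPartitionSubspace n U) (hW : IsPartitionSubspace n W) :
    IsPartitionSubspace n (U ⊔ W) := by
  obtain ⟨π, rfl⟩ := hU; obtain ⟨σ, rfl⟩ := hW
  exact ⟨π ⊔ σ, partSubspace_sup n π σ⟩

lemma partSubspace_bot (n : ℕ) : partSubspace n ⊥ = ⊥ := by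
  apply le_antisymm _ bot_le
  apply Submodule.span_le.2
  rintro x ⟨i, j, hij, hrel, rfl⟩
  have : i = j := hrel
  exact absurd this hij.ne

lemma isPartitionSubspace_bot (n : ℕ) : IsPartitionSubspace n ⊥ :=
  ⟨⊥, (partSubspace_bot n).symm⟩

lemma partSubspace_top (n : ℕ) (hn : 2 ≤ n) : partSubspace n ⊤ = ⊤ := by
  rw [eq_top_iff]
  intro x _
  have hlast : (⟨n-1, Nat.sub_lt (by omega) one_pos⟩ : Fin n) = ⟨n-1, Nat.sub_lt (by omega) one_pos⟩ := rfl
  have h0 : unitVec n ⟨n-1, Nat.sub_lt (by omega) one_pos⟩ = 0 := by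
    funext k'
    exact if_neg (by have := k'.2; simp only []; omega)
  have h1 : ∀ k : Fin (n-1), g n ⟨k, k.2.trans (Nat.sub_lt (by omega) one_pos)⟩
      ⟨n-1, Nat.sub_lt (by omega) one_pos⟩ = Pi.single k 1 := by
    intro k
    rw [g, h0, add_zero]
    funext k'
    simp only [unitVec, Pi.single_apply]
    by_cases h : k' = k
    · subst h; simp
    · rw [if_neg (by simpa [Fin.ext_iff] using h), if_neg h]
  have hx : x = ∑ k : Fin (n-1), x k • g n ⟨k, k.2.trans (Nat.sub_lt (by omega) one_pos)⟩
      ⟨n-1, Nat.sub_lt (by omega) one_pos⟩ := by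
    conv_lhs => rw [← Finset.univ_sum_single x]
    refine Finset.sum_congr rfl fun k _ => ?_
    rw [h1 k]
    funext k'
    simp [Pi.single_apply]
  rw [hx]
  refine Submodule.sum_mem _ fun k _ => Submodule.smul_mem _ _ ?_
  refine Submodule.subset_span ⟨_, _, ?_, trivial, rfl⟩
  simp only [Fin.mk_lt_mk]
  omega

lemma isPartitionSubspace_top (n : ℕ) (hn : 2 ≤ n) : IsPartitionSubspace n ⊤ :=
  ⟨⊤, (partSubspace_top n hn).symm⟩

variable {n : ℕ}

/-- The completed flag, `ℕ`-indexed: `⊥` at `0`, slots at `1..n-2`, `⊤` from `n-1` on. -/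
def Cc (C : VFlag n) (j : ℕ) : Submodule (ZMod 2) (Fin (n - 1) → ZMod 2) :=
  if h : 1 ≤ j ∧ j ≤ n - 2 then C.1 ⟨j - 1, by omega⟩ else if j = 0 then ⊥ else ⊤

lemma Cc_zero (C : VFlag n) : Cc C 0 = ⊥ := by simp [Cc]

lemma Cc_slot (C : VFlag n) {j : ℕ} (h1 : 1 ≤ j) (h2 : j ≤ n - 2) :
    Cc C j = C.1 ⟨j - 1, by omega⟩ := by simp [Cc, h1, h2]

lemma Cc_slot' (C : VFlag n) (k : Fin (n - 2)) :
    Cc C ((k : ℕ) + 1) = C.1 k := by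
  have h : (⟨(k:ℕ)+1-1, by omega⟩ : Fin (n-2)) = k := Fin.ext (by simp)
  rw [Cc_slot C (by omega) (by omega : (k:ℕ)+1 ≤ n-2), h]

lemma Cc_top (C : VFlag n) {j : ℕ} (h : n - 1 ≤ j) (hn : 3 ≤ n) : Cc C j = ⊤ := by
  have : ¬ (1 ≤ j ∧ j ≤ n - 2) := by omega
  simp [Cc, this, show j ≠ 0 by omega]

lemma finrank_Vn (hn : 3 ≤ n) :
    Module.finrank (ZMod 2) (Fin (n - 1) → ZMod 2) = n - 1 :=
  Module.finrank_fin_fun (ZMod 2)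

lemma finrank_Cc (C : VFlag n) (j : ℕ) (hn : 3 ≤ n) :
    Module.finrank (ZMod 2) (Cc C j) = min j (n - 1) := by
  rcases Nat.eq_zero_or_pos j with rfl | hj
  · simp [Cc_zero, finrank_bot]
  rcases le_or_gt j (n - 2) with h2 | h2
  · rw [Cc_slot C hj h2, C.2.2]
    simp only [Fin.val_mk]
    omega
  · rw [Cc_top C (by omega) hn, finrank_top, finrank_Vn hn]
    omega

lemma Cc_mono (C : VFlag n) : Monotone (Cc C) := by
  intro a b hab
  rcases Nat.eq_zero_or_pos a with rfl | ha
  · rw [Cc_zero]; exact bot_le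
  rcases le_or_gt b (n - 2) with hb | hb
  · rw [Cc_slot C ha (le_trans hab hb), Cc_slot C (le_trans ha hab) hb]
    exact C.2.1.monotone (by simp only [Fin.mk_le_mk]; omega)
  · rcases le_or_gt a (n - 2) with ha2 | ha2
    · have hn : 3 ≤ n := by omega
      have hb' : Cc C b = ⊤ := Cc_top C (by omega) hn
      rw [hb']; exact le_top
    · have h1 : ¬ (1 ≤ a ∧ a ≤ n - 2) := by omega
      have h2 : ¬ (1 ≤ b ∧ b ≤ n - 2) := by omega
      simp [Cc, h1, h2, show a ≠ 0 by omega, show b ≠ 0 by omega]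

lemma Cc_part (C : VFlag n) (hC : ∀ k, IsPartitionSubspace n (C.1 k)) (hn : 3 ≤ n)
    (j : ℕ) : IsPartitionSubspace n (Cc C j) := by
  rcases Nat.eq_zero_or_pos j with rfl | hj
  · rw [Cc_zero]; exact isPartitionSubspace_bot n
  rcases le_or_gt j (n - 2) with h2 | h2
  · rw [Cc_slot C hj h2]; exact hC _
  · rw [Cc_top C (by omega) hn]; exact isPartitionSubspace_top n (by omega)

lemma VFlag_ext {C D : VFlag n} (h : ∀ j, Cc C j = Cc D j) : C = D := by
  apply Subtype.ext
  funext k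
  have := h ((k : ℕ) + 1)
  rwa [Cc_slot' C k, Cc_slot' D k] at this

/-- The rank table. -/
noncomputable def rr (C D : VFlag n) (k j : ℕ) : ℕ :=
  Module.finrank (ZMod 2) ((Cc C k) ⊓ (Cc D j) : Submodule (ZMod 2) (Fin (n-1) → ZMod 2))

lemma rr_left_zero (C D : VFlag n) (j : ℕ) : rr C D 0 j = 0 := by
  simp [rr, Cc_zero, finrank_bot]

lemma rr_right_zero (C D : VFlag n) (k : ℕ) : rr C D k 0 = 0 := by
  simp [rr, Cc_zero, finrank_bot]

lemma rr_right_top (C D : VFlag n) (k : ℕ) (hn : 3 ≤ n) :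
    rr C D k (n-1) = min k (n-1) := by
  rw [rr, Cc_top D le_rfl hn, inf_top_eq, finrank_Cc C k hn]

lemma rr_left_top (C D : VFlag n) (j : ℕ) (hn : 3 ≤ n) :
    rr C D (n-1) j = min j (n-1) := by
  rw [rr, Cc_top C le_rfl hn, top_inf_eq, finrank_Cc D j hn]

lemma rr_le_left (C D : VFlag n) (k j : ℕ) (hn : 3 ≤ n) : rr C D k j ≤ min k (n-1) := by
  rw [← finrank_Cc C k hn]
  exact Submodule.finrank_mono inf_le_left

lemma rr_le_right (C D : VFlag n) (k j : ℕ) (hn : 3 ≤ n) : rr C D k j ≤ min j (n-1) := by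
  rw [← finrank_Cc D j hn]
  exact Submodule.finrank_mono inf_le_right

lemma rr_mono_left (C D : VFlag n) {k k' : ℕ} (h : k ≤ k') (j : ℕ) :
    rr C D k j ≤ rr C D k' j :=
  Submodule.finrank_mono (inf_le_inf_right _ (Cc_mono C h))

lemma rr_mono_right (C D : VFlag n) (k : ℕ) {j j' : ℕ} (h : j ≤ j') :
    rr C D k j ≤ rr C D k j' :=
  Submodule.finrank_mono (inf_le_inf_left _ (Cc_mono D h))

lemma rr_succ_le (C D : VFlag n) (k j : ℕ) (hn : 3 ≤ n) :
    rr C D (k+1) j ≤ rr C D k j + 1 := by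
  have hAB : Cc C k ≤ Cc C (k+1) := Cc_mono C (Nat.le_succ k)
  set A := Cc C k
  set B := Cc C (k+1)
  set W := Cc D j
  have h1 : Module.finrank (ZMod 2) ((B ⊓ W) ⊔ A : Submodule (ZMod 2) _)
      + Module.finrank (ZMod 2) ((B ⊓ W) ⊓ A : Submodule (ZMod 2) _)
      = Module.finrank (ZMod 2) (B ⊓ W : Submodule (ZMod 2) _) + Module.finrank (ZMod 2) A :=
    Submodule.finrank_sup_add_finrank_inf_eq _ _
  have h2 : (B ⊓ W) ⊓ A = A ⊓ W := by
    rw [inf_comm (B ⊓ W) A, ← inf_assoc, inf_eq_left.2 hAB]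
  have h3 : (B ⊓ W) ⊔ A ≤ B := sup_le inf_le_left hAB
  have h4 := Submodule.finrank_mono h3
  rw [h2] at h1
  have h5 : Module.finrank (ZMod 2) A = min k (n-1) := finrank_Cc C k hn
  have h6 : Module.finrank (ZMod 2) B = min (k+1) (n-1) := finrank_Cc C (k+1) hn
  have hg1 : rr C D (k+1) j = Module.finrank (ZMod 2)
      (B ⊓ W : Submodule (ZMod 2) (Fin (n-1) → ZMod 2)) := rfl
  have hg2 : rr C D k j = Module.finrank (ZMod 2)
      (A ⊓ W : Submodule (ZMod 2) (Fin (n-1) → ZMod 2)) := rfl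
  rw [hg1, hg2]
  omega


lemma rr_jump_mono (C D : VFlag n) (hn : 3 ≤ n) {k j j' : ℕ} (hk : 1 ≤ k) (hjj : j ≤ j')
    (h : rr C D k j = rr C D (k-1) j + 1) :
    rr C D k j' = rr C D (k-1) j' + 1 := by
  have hnle : ¬ (Cc C k ⊓ Cc D j ≤ Cc C (k-1) ⊓ Cc D j) := fun hle => by
    have := Submodule.finrank_mono hle
    rw [show Module.finrank (ZMod 2) ↥(Cc C k ⊓ Cc D j) = rr C D k j from rfl,
      show Module.finrank (ZMod 2) ↥(Cc C (k-1) ⊓ Cc D j) = rr C D (k-1) j from rfl] at this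
    omega
  obtain ⟨x, hxB, hxA⟩ := SetLike.not_le_iff_exists.1 hnle
  have hxCk : x ∈ Cc C k := hxB.1
  have hxDj : x ∈ Cc D j := hxB.2
  have hxnA : x ∉ Cc C (k-1) := fun hx => hxA ⟨hx, hxDj⟩
  have hlt : (Cc C (k-1) ⊓ Cc D j' : Submodule (ZMod 2) (Fin (n-1) → ZMod 2))
      < Cc C k ⊓ Cc D j' := by
    rw [SetLike.lt_iff_le_and_exists]
    refine ⟨inf_le_inf_right _ (Cc_mono C (by omega)), x,
      ⟨hxCk, Cc_mono D hjj hxDj⟩, fun hx => hxnA hx.1⟩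
  have h1 : rr C D (k-1) j' < rr C D k j' := Submodule.finrank_lt_finrank_of_lt hlt
  have h2 : rr C D ((k-1)+1) j' ≤ rr C D (k-1) j' + 1 := rr_succ_le C D (k-1) j' hn
  rw [show k - 1 + 1 = k by omega] at h2
  omega

lemma rr_tri (C D : VFlag n) (hn : 3 ≤ n) {k : ℕ} (hk : 1 ≤ k) (j : ℕ) :
    rr C D k j = rr C D (k-1) j ∨ rr C D k j = rr C D (k-1) j + 1 := by
  have h1 : rr C D (k-1) j ≤ rr C D k j := rr_mono_left C D (by omega) j
  have h2 : rr C D ((k-1)+1) j ≤ rr C D (k-1) j + 1 := rr_succ_le C D (k-1) j hn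
  rw [show k - 1 + 1 = k by omega] at h2
  omega

lemma wwP_exists (C D : VFlag n) (k : ℕ) :
    ∃ j, j = n-1 ∨ rr C D k j = rr C D (k-1) j + 1 := ⟨n-1, Or.inl rfl⟩

/-- The relative-position word: `ww C D k` is the first column where row `k` jumps. -/
noncomputable def ww (C D : VFlag n) (k : ℕ) : ℕ := Nat.find (wwP_exists C D k)

lemma ww_le (C D : VFlag n) (k : ℕ) : ww C D k ≤ n-1 :=
  Nat.find_min' (wwP_exists C D k) (Or.inl rfl)

lemma ww_spec (C D : VFlag n) (hn : 3 ≤ n) {k : ℕ} (hk1 : 1 ≤ k) (hk2 : k ≤ n-1) :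
    rr C D k (ww C D k) = rr C D (k-1) (ww C D k) + 1 := by
  rcases Nat.find_spec (wwP_exists C D k) with h | h
  · show rr C D k (ww C D k) = rr C D (k-1) (ww C D k) + 1
    rw [show ww C D k = n - 1 from h, rr_right_top _ _ _ hn, rr_right_top _ _ _ hn]
    omega
  · exact h

lemma ww_pos (C D : VFlag n) (hn : 3 ≤ n) {k : ℕ} (hk1 : 1 ≤ k) (hk2 : k ≤ n-1) :
    1 ≤ ww C D k := by
  by_contra h
  have h0 : ww C D k = 0 := by omega
  have h1 := ww_spec C D hn hk1 hk2
  rw [h0, rr_right_zero, rr_right_zero] at h1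
  omega

lemma jump_iff (C D : VFlag n) (hn : 3 ≤ n) {k : ℕ} (hk1 : 1 ≤ k) (hk2 : k ≤ n-1) (j : ℕ) :
    rr C D k j = rr C D (k-1) j + 1 ↔ ww C D k ≤ j := by
  constructor
  · intro h
    exact Nat.find_min' (wwP_exists C D k) (Or.inr h)
  · intro h
    exact rr_jump_mono C D hn hk1 h (ww_spec C D hn hk1 hk2)

lemma rr_step (C D : VFlag n) (hn : 3 ≤ n) {k : ℕ} (hk1 : 1 ≤ k) (hk2 : k ≤ n-1) (j : ℕ) :
    rr C D k j = rr C D (k-1) j + (if ww C D k ≤ j then 1 else 0) := by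
  split
  · exact (jump_iff C D hn hk1 hk2 j).2 (by assumption)
  · rcases rr_tri C D hn hk1 j with h | h
    · omega
    · exact absurd ((jump_iff C D hn hk1 hk2 j).1 h) (by assumption)

lemma rr_eq_card (C D : VFlag n) (hn : 3 ≤ n) :
    ∀ t, t ≤ n-1 → ∀ j, rr C D t j
      = ((Finset.Icc 1 t).filter (fun a => ww C D a ≤ j)).card := by
  intro t
  induction t with
  | zero => intro _ j; simp [rr_left_zero]
  | succ t ih =>
    intro ht j
    have hins : Finset.Icc 1 (t+1) = insert (t+1) (Finset.Icc 1 t) := by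
      ext a
      simp only [Finset.mem_Icc, Finset.mem_insert]
      omega
    rw [hins, Finset.filter_insert]
    have hstep := rr_step C D hn (by omega : 1 ≤ t+1) ht j
    rw [show t + 1 - 1 = t by omega] at hstep
    have hnotmem : (t+1) ∉ Finset.Icc 1 t := by simp
    by_cases hcond : ww C D (t+1) ≤ j
    · rw [if_pos hcond]
      rw [Finset.card_insert_of_notMem (fun hmem => hnotmem (Finset.mem_of_mem_filter _ hmem))]
      rw [← ih (by omega) j]
      rw [if_pos hcond] at hstep
      omega
    · rw [if_neg hcond, ← ih (by omega) j]
      rw [if_neg hcond] at hstep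
      omega

lemma card_ww_le (C D : VFlag n) (hn : 3 ≤ n) {j : ℕ} (hj : j ≤ n-1) :
    ((Finset.Icc 1 (n-1)).filter (fun a => ww C D a ≤ j)).card = j := by
  rw [← rr_eq_card C D hn (n-1) le_rfl j, rr_left_top _ _ _ hn]
  omega

lemma ww_eq_card (C D : VFlag n) (hn : 3 ≤ n) {v : ℕ} (hv1 : 1 ≤ v) (hv2 : v ≤ n-1) :
    ((Finset.Icc 1 (n-1)).filter (fun a => ww C D a = v)).card = 1 := by
  have hsub : (Finset.Icc 1 (n-1)).filter (fun a => ww C D a ≤ v - 1)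
      ⊆ (Finset.Icc 1 (n-1)).filter (fun a => ww C D a ≤ v) := by
    intro a ha
    simp only [Finset.mem_filter, Finset.mem_Icc] at ha ⊢
    omega
  have heq : (Finset.Icc 1 (n-1)).filter (fun a => ww C D a = v)
      = (Finset.Icc 1 (n-1)).filter (fun a => ww C D a ≤ v)
        \ (Finset.Icc 1 (n-1)).filter (fun a => ww C D a ≤ v - 1) := by
    ext a
    simp only [Finset.mem_filter, Finset.mem_sdiff, Finset.mem_Icc]
    constructor
    · rintro ⟨h1, h2⟩; exact ⟨⟨h1, by omega⟩, fun h => by omega⟩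
    · rintro ⟨⟨h1, h2⟩, h3⟩
      refine ⟨h1, ?_⟩
      by_contra hne
      exact h3 ⟨h1, by omega⟩
  rw [heq, Finset.card_sdiff_of_subset hsub, card_ww_le C D hn hv2, card_ww_le C D hn (by omega)]
  omega

lemma ww_exists_eq (C D : VFlag n) (hn : 3 ≤ n) {v : ℕ} (hv1 : 1 ≤ v) (hv2 : v ≤ n-1) :
    ∃ a, (1 ≤ a ∧ a ≤ n-1) ∧ ww C D a = v := by
  have h := ww_eq_card C D hn hv1 hv2
  obtain ⟨a, ha⟩ := Finset.card_eq_one.1 h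
  have : a ∈ (Finset.Icc 1 (n-1)).filter (fun a => ww C D a = v) := by rw [ha]; simp
  simp only [Finset.mem_filter, Finset.mem_Icc] at this
  exact ⟨a, this.1, this.2⟩

lemma ww_inj (C D : VFlag n) (hn : 3 ≤ n) {a b : ℕ}
    (ha1 : 1 ≤ a) (ha2 : a ≤ n-1) (hb1 : 1 ≤ b) (hb2 : b ≤ n-1)
    (hab : ww C D a = ww C D b) : a = b := by
  have hv1 : 1 ≤ ww C D a := ww_pos C D hn ha1 ha2
  have hv2 : ww C D a ≤ n-1 := ww_le C D a
  have h := ww_eq_card C D hn hv1 hv2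
  obtain ⟨c, hc⟩ := Finset.card_eq_one.1 h
  have hma : a ∈ (Finset.Icc 1 (n-1)).filter (fun x => ww C D x = ww C D a) := by
    simp only [Finset.mem_filter, Finset.mem_Icc]
    exact ⟨⟨ha1, ha2⟩, trivial⟩
  have hmb : b ∈ (Finset.Icc 1 (n-1)).filter (fun x => ww C D x = ww C D a) := by
    simp only [Finset.mem_filter, Finset.mem_Icc]
    exact ⟨⟨hb1, hb2⟩, hab.symm⟩
  rw [hc, Finset.mem_singleton] at hma hmb
  rw [hma, hmb]


lemma rr_self (D : VFlag n) (hn : 3 ≤ n) (a b : ℕ) :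
    rr D D a b = min (min a b) (n-1) := by
  rcases le_total a b with h | h
  · rw [rr, inf_eq_left.2 (Cc_mono D h), finrank_Cc D a hn]
    omega
  · rw [rr, inf_eq_right.2 (Cc_mono D h), finrank_Cc D b hn]
    omega

lemma ww_self (D : VFlag n) (hn : 3 ≤ n) {k : ℕ} (hk1 : 1 ≤ k) (hk2 : k ≤ n-1) :
    ww D D k = k := by
  have h1 : ww D D k ≤ k := by
    apply Nat.find_min' (wwP_exists D D k)
    right
    rw [rr_self D hn, rr_self D hn]
    omega
  have h2 := ww_spec D D hn hk1 hk2
  rw [rr_self D hn, rr_self D hn] at h2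
  omega

/-- The inversion-number potential. -/
noncomputable def Phi (C D : VFlag n) : ℕ :=
  ∑ k ∈ Finset.Icc 1 (n-1), ((k-1) - rr C D (k-1) (ww C D k - 1))

lemma Phi_self (D : VFlag n) (hn : 3 ≤ n) : Phi D D = 0 := by
  apply Finset.sum_eq_zero
  intro k hk
  simp only [Finset.mem_Icc] at hk
  rw [ww_self D hn hk.1 hk.2, rr_self D hn]
  omega

lemma eq_of_no_descent (C D : VFlag n) (hn : 3 ≤ n)
    (h : ∀ k, 1 ≤ k → k ≤ n-2 → ww C D k ≤ ww C D (k+1)) : C = D := by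
  -- ww is the identity
  have hge : ∀ k, 1 ≤ k → k ≤ n-1 → k ≤ ww C D k := by
    intro k
    induction k with
    | zero => omega
    | succ k ih =>
      intro _ hk2
      rcases Nat.eq_zero_or_pos k with rfl | hk
      · exact ww_pos C D hn le_rfl (by omega)
      · have h1 : k ≤ ww C D k := ih hk (by omega)
        have h2 : ww C D k ≤ ww C D (k+1) := h k hk (by omega)
        have h3 : ww C D k ≠ ww C D (k+1) := fun he =>
          absurd (ww_inj C D hn hk (by omega) (by omega) (by omega) he) (by omega)
        omega
  have hid : ∀ d k, 1 ≤ k → k ≤ n-1 → n-1-k ≤ d → ww C D k = k := by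
    intro d
    induction d with
    | zero =>
      intro k hk1 hk2 hd
      have : k = n-1 := by omega
      have := hge k hk1 hk2
      have := ww_le C D k
      omega
    | succ d ih =>
      intro k hk1 hk2 hd
      by_contra hne
      have h1 : k < ww C D k := lt_of_le_of_ne (hge k hk1 hk2) (fun h => hne h.symm)
      set v := ww C D k with hv
      have hvle : v ≤ n-1 := ww_le C D k
      have h2 : ww C D v = v := ih v (by omega) hvle (by omega)
      have := ww_inj C D hn hk1 hk2 (by omega) hvle (hv ▸ h2.symm)
      omega
  -- so all diagonal ranks are full
  have hdiag : ∀ k, k ≤ n-1 → rr C D k k = k := by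
    intro k
    induction k with
    | zero => intro _; exact rr_left_zero C D 0
    | succ k ih =>
      intro hk
      have h1 : rr C D (k+1) (k+1) = rr C D k (k+1) + 1 := by
        have := (jump_iff C D hn (by omega : 1 ≤ k+1) hk (k+1)).2
          (by rw [hid (n-1) (k+1) (by omega) hk (by omega)])
        rwa [show k+1-1 = k by omega] at this
      have h2 : rr C D k k ≤ rr C D k (k+1) := rr_mono_right C D k (by omega)
      have h3 : rr C D k (k+1) ≤ min k (n-1) := rr_le_left C D k (k+1) hn
      have h4 := ih (by omega)
      omega
  apply VFlag_ext
  intro j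
  rcases le_or_gt j (n-1) with hj | hj
  · have h1 : rr C D j j = j := hdiag j hj
    have hC : Module.finrank (ZMod 2) (Cc C j) = j := by rw [finrank_Cc C j hn]; omega
    have hD : Module.finrank (ZMod 2) (Cc D j) = j := by rw [finrank_Cc D j hn]; omega
    have e1 : (Cc C j ⊓ Cc D j : Submodule (ZMod 2) (Fin (n-1) → ZMod 2)) = Cc C j :=
      Submodule.eq_of_le_of_finrank_le inf_le_left (by rw [hC]; exact h1.ge)
    have e2 : (Cc C j ⊓ Cc D j : Submodule (ZMod 2) (Fin (n-1) → ZMod 2)) = Cc D j :=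
      Submodule.eq_of_le_of_finrank_le inf_le_right (by rw [hD]; exact h1.ge)
    rw [← e1, e2]
  · rw [Cc_top C (by omega) hn, Cc_top D (by omega) hn]

lemma exists_descent (C D : VFlag n) (hn : 3 ≤ n) (hne : C ≠ D) :
    ∃ k, 1 ≤ k ∧ k ≤ n-2 ∧ ww C D (k+1) < ww C D k := by
  by_contra h
  push_neg at h
  exact hne (eq_of_no_descent C D hn (fun k hk1 hk2 => h k hk1 hk2))

section Step

variable {C C' D : VFlag n} {k0 : ℕ}

lemma rr_row_eq (h_eq : ∀ a, a ≠ k0 → Cc C a = Cc C' a) {a : ℕ} (ha : a ≠ k0) (j : ℕ) :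
    rr C' D a j = rr C D a j := by
  show Module.finrank (ZMod 2) ((Cc C' a) ⊓ (Cc D j) : Submodule (ZMod 2) _)
    = Module.finrank (ZMod 2) ((Cc C a) ⊓ (Cc D j) : Submodule (ZMod 2) _)
  rw [← h_eq a ha]

lemma ww_off (hk01 : 1 ≤ k0) (h_eq : ∀ a, a ≠ k0 → Cc C a = Cc C' a) {a : ℕ}
    (ha : a ≠ k0) (ha' : a ≠ k0 + 1) : ww C' D a = ww C D a := by
  have hprev : a - 1 ≠ k0 := by omega
  apply le_antisymm
  · apply Nat.find_min' (wwP_exists C' D a)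
    rcases Nat.find_spec (wwP_exists C D a) with h | h
    · exact Or.inl h
    · right
      rw [rr_row_eq h_eq ha, rr_row_eq h_eq hprev]
      exact h
  · apply Nat.find_min' (wwP_exists C D a)
    rcases Nat.find_spec (wwP_exists C' D a) with h | h
    · exact Or.inl h
    · right
      rw [rr_row_eq h_eq ha, rr_row_eq h_eq hprev] at h
      exact h

lemma ww_swap (hn : 3 ≤ n) (hk01 : 1 ≤ k0) (hk02 : k0 ≤ n-2)
    (h_eq : ∀ a, a ≠ k0 → Cc C a = Cc C' a)
    (hne : ww C' D k0 ≠ ww C D k0) :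
    ww C' D k0 = ww C D (k0+1) ∧ ww C' D (k0+1) = ww C D k0 := by
  have hk0n : k0 ≤ n-1 := by omega
  have hk1n : k0+1 ≤ n-1 := by omega
  have ha1 : 1 ≤ ww C D k0 := ww_pos C D hn hk01 hk0n
  have ha2 : ww C D k0 ≤ n-1 := ww_le C D k0
  have hb1 : 1 ≤ ww C D (k0+1) := ww_pos C D hn (by omega) hk1n
  have hb2 : ww C D (k0+1) ≤ n-1 := ww_le C D (k0+1)
  have hab : ww C D k0 ≠ ww C D (k0+1) := fun h =>
    absurd (ww_inj C D hn hk01 hk0n (by omega) hk1n h) (by omega)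
  -- attainer of (ww C D k0) under (C', D)
  obtain ⟨c, hcr, hc⟩ := ww_exists_eq C' D hn ha1 ha2
  have hcval : c = k0 ∨ c = k0 + 1 := by
    by_contra hcc
    push_neg at hcc
    rw [ww_off hk01 h_eq hcc.1 hcc.2] at hc
    have := ww_inj C D hn hcr.1 hcr.2 hk01 hk0n hc
    omega
  have hb'a : ww C' D (k0+1) = ww C D k0 := by
    rcases hcval with rfl | rfl
    · exact absurd hc hne
    · exact hc
  -- attainer of (ww C D (k0+1)) under (C', D)
  obtain ⟨d, hdr, hd⟩ := ww_exists_eq C' D hn hb1 hb2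
  have hdval : d = k0 ∨ d = k0 + 1 := by
    by_contra hdd
    push_neg at hdd
    rw [ww_off hk01 h_eq hdd.1 hdd.2] at hd
    have := ww_inj C D hn hdr.1 hdr.2 (by omega) hk1n hd
    omega
  have ha'b : ww C' D k0 = ww C D (k0+1) := by
    rcases hdval with rfl | rfl
    · exact hd
    · rw [hd] at hb'a; exact absurd hb'a.symm hab
  exact ⟨ha'b, hb'a⟩

lemma phi_step (hn : 3 ≤ n) (hk01 : 1 ≤ k0) (hk02 : k0 ≤ n-2)
    (h_eq : ∀ a, a ≠ k0 → Cc C a = Cc C' a) :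
    (ww C' D k0 = ww C D k0 ∧ Phi C' D = Phi C D) ∨
    (ww C' D k0 ≠ ww C D k0 ∧
      ((ww C D (k0+1) < ww C D k0 ∧ Phi C' D + 1 = Phi C D) ∨
       (ww C D k0 < ww C D (k0+1) ∧ Phi C D + 1 = Phi C' D))) := by
  have hk0n : k0 ≤ n-1 := by omega
  have hk1n : k0+1 ≤ n-1 := by omega
  have hmem0 : k0 ∈ Finset.Icc 1 (n-1) := by simp only [Finset.mem_Icc]; omega
  have hmem1 : k0+1 ∈ Finset.Icc 1 (n-1) \ {k0} := by
    simp only [Finset.mem_sdiff, Finset.mem_Icc, Finset.mem_singleton]; omega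
  have hdec : ∀ (E : VFlag n), Phi E D
      = (∑ k ∈ (Finset.Icc 1 (n-1) \ {k0}) \ {k0+1},
          ((k-1) - rr E D (k-1) (ww E D k - 1)))
        + ((k0-1) - rr E D (k0-1) (ww E D k0 - 1))
        + (k0 - rr E D k0 (ww E D (k0+1) - 1)) := by
    intro E
    rw [Phi, Finset.sum_eq_sum_sdiff_singleton_add hmem0
      (fun k => (k-1) - rr E D (k-1) (ww E D k - 1)),
      Finset.sum_eq_sum_sdiff_singleton_add hmem1
      (fun k => (k-1) - rr E D (k-1) (ww E D k - 1)),
      show k0+1-1 = k0 by omega]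
    ring
  have hrest : ∀ k ∈ (Finset.Icc 1 (n-1) \ {k0}) \ {k0+1},
      ((k-1) - rr C' D (k-1) (ww C' D k - 1)) = ((k-1) - rr C D (k-1) (ww C D k - 1)) := by
    intro k hk
    simp only [Finset.mem_sdiff, Finset.mem_Icc, Finset.mem_singleton] at hk
    obtain ⟨⟨⟨hk1, hk2⟩, hkne0⟩, hkne1⟩ := hk
    rw [ww_off hk01 h_eq hkne0 hkne1, rr_row_eq h_eq (by omega) _]
  have ha1 : 1 ≤ ww C D k0 := ww_pos C D hn hk01 hk0n
  have ha2 : ww C D k0 ≤ n-1 := ww_le C D k0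
  have hb1 : 1 ≤ ww C D (k0+1) := ww_pos C D hn (by omega) hk1n
  have hb2 : ww C D (k0+1) ≤ n-1 := ww_le C D (k0+1)
  have hab : ww C D k0 ≠ ww C D (k0+1) := fun h =>
    absurd (ww_inj C D hn hk01 hk0n (by omega) hk1n h) (by omega)
  have hrowC : ∀ j, rr C D k0 j = rr C D (k0-1) j + (if ww C D k0 ≤ j then 1 else 0) :=
    fun j => rr_step C D hn hk01 hk0n j
  have hrowC' : ∀ j, rr C' D k0 j
      = rr C D (k0-1) j + (if ww C' D k0 ≤ j then 1 else 0) := by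
    intro j
    rw [rr_step C' D hn hk01 hk0n j, rr_row_eq h_eq (by omega : k0-1 ≠ k0) j]
  have hbound : ∀ j, rr C D (k0-1) j ≤ k0 - 1 := by
    intro j
    have := rr_le_left C D (k0-1) j hn
    omega
  have hrowprev : ∀ j, rr C' D (k0-1) j = rr C D (k0-1) j :=
    rr_row_eq h_eq (by omega : k0-1 ≠ k0)
  by_cases hcase : ww C' D k0 = ww C D k0
  · left
    refine ⟨hcase, ?_⟩
    have hb' : ww C' D (k0+1) = ww C D (k0+1) := by
      obtain ⟨d, hdr, hd⟩ := ww_exists_eq C' D hn hb1 hb2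
      have hdval : d = k0 ∨ d = k0 + 1 := by
        by_contra hdd
        push_neg at hdd
        rw [ww_off hk01 h_eq hdd.1 hdd.2] at hd
        have := ww_inj C D hn hdr.1 hdr.2 (by omega) hk1n hd
        omega
      rcases hdval with rfl | rfl
      · rw [hcase] at hd
        exact absurd hd hab
      · exact hd
    rw [hdec C, hdec C', Finset.sum_congr rfl hrest, hcase, hb',
      hrowprev (ww C D k0 - 1), hrowC' (ww C D (k0+1) - 1),
      hrowC (ww C D (k0+1) - 1), hcase]
  · right
    refine ⟨hcase, ?_⟩
    obtain ⟨ha'b, hb'a⟩ := ww_swap hn hk01 hk02 h_eq hcase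
    rw [hdec C, hdec C', Finset.sum_congr rfl hrest, ha'b, hb'a,
      hrowprev (ww C D (k0+1) - 1), hrowC' (ww C D k0 - 1), ha'b,
      hrowC (ww C D (k0+1) - 1)]
    have h1 := hbound (ww C D k0 - 1)
    have h2 := hbound (ww C D (k0+1) - 1)
    rcases lt_or_gt_of_ne hab with hlt | hgt
    · right
      refine ⟨hlt, ?_⟩
      rw [if_neg (by omega : ¬ ww C D (k0+1) ≤ ww C D k0 - 1),
        if_pos (by omega : ww C D k0 ≤ ww C D (k0+1) - 1)]
      have h3 : rr C D (k0-1) (ww C D k0 - 1) ≤ rr C D (k0-1) (ww C D (k0+1) - 1) :=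
        rr_mono_right C D (k0-1) (by omega)
      omega
    · left
      refine ⟨hgt, ?_⟩
      rw [if_pos (by omega : ww C D (k0+1) ≤ ww C D k0 - 1),
        if_neg (by omega : ¬ ww C D k0 ≤ ww C D (k0+1) - 1)]
      have h3 : rr C D (k0-1) (ww C D (k0+1) - 1) ≤ rr C D (k0-1) (ww C D k0 - 1) :=
        rr_mono_right C D (k0-1) (by omega)
      omega

end Step


section Replace

variable {C D : VFlag n}

/-- Replace the `k`-th subspace of a flag. -/
def replaceFlag (C : VFlag n) (k : ℕ) (X : Submodule (ZMod 2) (Fin (n-1) → ZMod 2))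
    (hn : 3 ≤ n) (hk1 : 1 ≤ k) (hk2 : k ≤ n-2)
    (hlow : Cc C (k-1) < X) (hhigh : X < Cc C (k+1))
    (hrank : Module.finrank (ZMod 2) X = k) : VFlag n := by
  have hs : k - 1 < n - 2 := Nat.lt_of_lt_of_le (by omega) (le_refl (n-2))
  refine ⟨Function.update C.1 ⟨k-1, hs⟩ X, ?_, ?_⟩
  · intro i i' hii
    rcases eq_or_ne i (⟨k-1, hs⟩ : Fin (n-2)) with hieq | hi
    · rcases eq_or_ne i' (⟨k-1, hs⟩ : Fin (n-2)) with hieq' | hi'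
      · rw [hieq, hieq'] at hii
        exact absurd hii (lt_irrefl _)
      · rw [hieq, Function.update_self, Function.update_of_ne hi']
        have hik : k - 1 < (i' : ℕ) := by
          have : (i : ℕ) < (i' : ℕ) := hii
          rw [hieq] at this
          exact this
        have hkn : k + 1 ≤ n - 2 := by
          have := i'.2
          omega
        calc X < Cc C (k+1) := hhigh
          _ = C.1 ⟨k, by omega⟩ := by
              rw [Cc_slot C (by omega) hkn]
              congr 1
          _ ≤ C.1 i' := C.2.1.monotone (by
              rw [Fin.le_def]
              simp only [Fin.val_mk]
              omega)
    · rcases eq_or_ne i' (⟨k-1, hs⟩ : Fin (n-2)) with hieq' | hi'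
      · rw [hieq', Function.update_self, Function.update_of_ne hi]
        have hik : (i : ℕ) < k - 1 := by
          have : (i : ℕ) < (i' : ℕ) := hii
          rw [hieq'] at this
          exact this
        have hk1' : 2 ≤ k := by omega
        calc C.1 i ≤ C.1 ⟨k-2, by omega⟩ := C.2.1.monotone (by
              rw [Fin.le_def]
              simp only [Fin.val_mk]
              omega)
          _ = Cc C (k-1) := by
              rw [Cc_slot C (by omega) (by omega)]
              congr 1
          _ < X := hlow
      · rw [Function.update_of_ne hi, Function.update_of_ne hi']
        exact C.2.1 hii
  · intro i
    rcases eq_or_ne i (⟨k-1, hs⟩ : Fin (n-2)) with hieq | hi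
    · rw [hieq, Function.update_self, hrank]
      simp only [Fin.val_mk]
      omega
    · rw [Function.update_of_ne hi]
      exact C.2.2 i

lemma Cc_replaceFlag_same (C : VFlag n) (k : ℕ) (X : Submodule (ZMod 2) (Fin (n-1) → ZMod 2))
    (hn : 3 ≤ n) (hk1 : 1 ≤ k) (hk2 : k ≤ n-2)
    (hlow : Cc C (k-1) < X) (hhigh : X < Cc C (k+1))
    (hrank : Module.finrank (ZMod 2) X = k) :
    Cc (replaceFlag C k X hn hk1 hk2 hlow hhigh hrank) k = X := by
  rw [Cc_slot _ hk1 hk2]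
  show Function.update C.1 _ X _ = X
  rw [show (⟨k-1, by omega⟩ : Fin (n-2)) = ⟨k-1, by omega⟩ from rfl]
  exact Function.update_self _ _ _

lemma Cc_replaceFlag_ne (C : VFlag n) (k : ℕ) (X : Submodule (ZMod 2) (Fin (n-1) → ZMod 2))
    (hn : 3 ≤ n) (hk1 : 1 ≤ k) (hk2 : k ≤ n-2)
    (hlow : Cc C (k-1) < X) (hhigh : X < Cc C (k+1))
    (hrank : Module.finrank (ZMod 2) X = k) {a : ℕ} (ha : a ≠ k) :
    Cc (replaceFlag C k X hn hk1 hk2 hlow hhigh hrank) a = Cc C a := by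
  rcases Nat.eq_zero_or_pos a with rfl | ha1
  · rw [Cc_zero, Cc_zero]
  rcases le_or_gt a (n-2) with ha2 | ha2
  · rw [Cc_slot _ ha1 ha2, Cc_slot C ha1 ha2]
    show Function.update C.1 _ X _ = C.1 _
    exact Function.update_of_ne (by simp only [ne_eq, Fin.mk.injEq]; omega) _ _
  · rw [Cc_top _ (by omega) hn, Cc_top C (by omega) hn]

end Replace

section GoodNeighbor

lemma exists_good_neighbor (C D : VFlag n) (hn : 3 ≤ n)
    (hC : ∀ k, IsPartitionSubspace n (C.1 k))
    (hD : ∀ k, IsPartitionSubspace n (D.1 k)) (hne : C ≠ D) :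
    ∃ C' : VFlag n, (∀ k, IsPartitionSubspace n (C'.1 k)) ∧
      (∃! sl : Fin (n-2), C.1 sl ≠ C'.1 sl) ∧ Phi C' D + 1 = Phi C D := by
  have hDne : ((Finset.Icc 1 (n-2)).filter (fun k => ww C D (k+1) < ww C D k)).Nonempty := by
    obtain ⟨k, hk1, hk2, hk3⟩ := exists_descent C D hn hne
    exact ⟨k, by simp only [Finset.mem_filter, Finset.mem_Icc]; exact ⟨⟨hk1, hk2⟩, hk3⟩⟩
  obtain ⟨k, hkmem, hkmin⟩ := Finset.exists_min_image _ (fun k => ww C D (k+1)) hDne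
  simp only [Finset.mem_filter, Finset.mem_Icc] at hkmem
  obtain ⟨⟨hk1, hk2⟩, hdesc⟩ := hkmem
  have hj1 : 1 ≤ ww C D (k+1) := ww_pos C D hn (by omega) (by omega)
  have hj2 : ww C D (k+1) ≤ n-1 := ww_le C D (k+1)
  -- Claim A : rows with small ww-value are below k
  have claimA : ∀ a, 1 ≤ a → a ≤ n-1 → ww C D a < ww C D (k+1) → a ≤ k-1 := by
    intro a ha1 ha2 haj
    by_contra hak
    push_neg at hak
    have hak2 : k + 2 ≤ a := by
      rcases Nat.lt_or_ge a (k+2) with h | h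
      · have hcase2 : a = k ∨ a = k + 1 := by omega
        rcases hcase2 with rfl | rfl
        · omega
        · omega
      · exact h
    have hSne : ((Finset.Icc (k+2) (n-1)).filter
        (fun x => ww C D x < ww C D (k+1))).Nonempty := ⟨a, by
      simp only [Finset.mem_filter, Finset.mem_Icc]; exact ⟨⟨hak2, ha2⟩, haj⟩⟩
    obtain ⟨amin, hammem, hamle⟩ := Finset.exists_min_image _ (fun x => x) hSne
    simp only [Finset.mem_filter, Finset.mem_Icc] at hammem
    obtain ⟨⟨ham1, ham2⟩, ham3⟩ := hammem
    have hprev_ge : ww C D (k+1) ≤ ww C D (amin - 1) := by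
      rcases eq_or_ne (amin - 1) (k+1) with he | hne' 
      · rw [he]
      · have h1 : amin - 1 ∉ (Finset.Icc (k+2) (n-1)).filter
            (fun x => ww C D x < ww C D (k+1)) := by
          intro hmem
          have := hamle _ hmem
          omega
        simp only [Finset.mem_filter, Finset.mem_Icc, not_and, not_lt] at h1
        exact h1 ⟨by omega, by omega⟩
    have hdmem : (amin - 1) ∈ (Finset.Icc 1 (n-2)).filter
        (fun x => ww C D (x+1) < ww C D x) := by
      simp only [Finset.mem_filter, Finset.mem_Icc]
      refine ⟨⟨by omega, by omega⟩, ?_⟩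
      rw [show amin - 1 + 1 = amin by omega]
      omega
    have := hkmin _ hdmem
    rw [show amin - 1 + 1 = amin by omega] at this
    omega
  -- the unique attainer of ww C D (k+1) is k+1
  have hattain : ∀ a, 1 ≤ a → a ≤ n-1 → ww C D a = ww C D (k+1) → a = k+1 :=
    fun a ha1 ha2 haj => ww_inj C D hn ha1 ha2 (by omega) (by omega) haj
  -- rank computations
  have hr1 : rr C D (k-1) (ww C D (k+1) - 1) = ww C D (k+1) - 1 := by
    rw [rr_eq_card C D hn (k-1) (by omega) _]
    have hseteq : (Finset.Icc 1 (k-1)).filter (fun a => ww C D a ≤ ww C D (k+1) - 1)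
        = (Finset.Icc 1 (n-1)).filter (fun a => ww C D a ≤ ww C D (k+1) - 1) := by
      apply Finset.ext
      intro a
      simp only [Finset.mem_filter, Finset.mem_Icc]
      constructor
      · rintro ⟨⟨h1, h2⟩, h3⟩; exact ⟨⟨h1, by omega⟩, h3⟩
      · rintro ⟨⟨h1, h2⟩, h3⟩
        have := claimA a h1 h2 (by omega)
        exact ⟨⟨h1, by omega⟩, h3⟩
    rw [hseteq]
    exact card_ww_le C D hn (by omega)
  have hr2 : rr C D (k-1) (ww C D (k+1)) = ww C D (k+1) - 1 := by
    rw [rr_eq_card C D hn (k-1) (by omega) _]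
    have hseteq : (Finset.Icc 1 (k-1)).filter (fun a => ww C D a ≤ ww C D (k+1))
        = (Finset.Icc 1 (n-1)).filter (fun a => ww C D a ≤ ww C D (k+1) - 1) := by
      apply Finset.ext
      intro a
      simp only [Finset.mem_filter, Finset.mem_Icc]
      constructor
      · rintro ⟨⟨h1, h2⟩, h3⟩
        refine ⟨⟨h1, by omega⟩, ?_⟩
        rcases eq_or_lt_of_le h3 with he | hl
        · exact absurd (hattain a h1 (by omega) he) (by omega)
        · omega
      · rintro ⟨⟨h1, h2⟩, h3⟩
        have := claimA a h1 h2 (by omega)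
        exact ⟨⟨h1, by omega⟩, by omega⟩
    rw [hseteq]
    exact card_ww_le C D hn (by omega)
  have hr4 : rr C D k (ww C D (k+1)) = ww C D (k+1) - 1 := by
    rw [rr_eq_card C D hn k (by omega) _]
    have hseteq : (Finset.Icc 1 k).filter (fun a => ww C D a ≤ ww C D (k+1))
        = (Finset.Icc 1 (n-1)).filter (fun a => ww C D a ≤ ww C D (k+1) - 1) := by
      apply Finset.ext
      intro a
      simp only [Finset.mem_filter, Finset.mem_Icc]
      constructor
      · rintro ⟨⟨h1, h2⟩, h3⟩
        refine ⟨⟨h1, by omega⟩, ?_⟩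
        rcases eq_or_lt_of_le h3 with he | hl
        · exact absurd (hattain a h1 (by omega) he) (by omega)
        · omega
      · rintro ⟨⟨h1, h2⟩, h3⟩
        have := claimA a h1 h2 (by omega)
        exact ⟨⟨h1, by omega⟩, by omega⟩
    rw [hseteq]
    exact card_ww_le C D hn (by omega)
  have hr3 : rr C D (k+1) (ww C D (k+1)) = ww C D (k+1) := by
    rw [rr_eq_card C D hn (k+1) (by omega) _]
    have hseteq : (Finset.Icc 1 (k+1)).filter (fun a => ww C D a ≤ ww C D (k+1))
        = (Finset.Icc 1 (n-1)).filter (fun a => ww C D a ≤ ww C D (k+1)) := by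
      apply Finset.ext
      intro a
      simp only [Finset.mem_filter, Finset.mem_Icc]
      constructor
      · rintro ⟨⟨h1, h2⟩, h3⟩; exact ⟨⟨h1, by omega⟩, h3⟩
      · rintro ⟨⟨h1, h2⟩, h3⟩
        refine ⟨⟨h1, ?_⟩, h3⟩
        rcases eq_or_lt_of_le h3 with he | hl
        · have := hattain a h1 h2 he; omega
        · have := claimA a h1 h2 (by omega); omega
    rw [hseteq]
    exact card_ww_le C D hn (by omega)
  -- subspace facts
  have hDj_rank : Module.finrank (ZMod 2) (Cc D (ww C D (k+1))) = ww C D (k+1) := by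
    rw [finrank_Cc D _ hn]; omega
  have hDle : Cc D (ww C D (k+1)) ≤ Cc C (k+1) := by
    have he : (Cc C (k+1) ⊓ Cc D (ww C D (k+1))
        : Submodule (ZMod 2) (Fin (n-1) → ZMod 2)) = Cc D (ww C D (k+1)) :=
      Submodule.eq_of_le_of_finrank_le inf_le_right (by rw [hDj_rank]; exact hr3.ge)
    rw [← he]
    exact inf_le_left
  have hXsum : Module.finrank (ZMod 2)
        (Cc C (k-1) ⊔ Cc D (ww C D (k+1)) : Submodule (ZMod 2) (Fin (n-1) → ZMod 2))
        + rr C D (k-1) (ww C D (k+1))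
      = Module.finrank (ZMod 2) (Cc C (k-1)) + Module.finrank (ZMod 2) (Cc D (ww C D (k+1))) :=
    Submodule.finrank_sup_add_finrank_inf_eq _ _
  have hCk1rank : Module.finrank (ZMod 2) (Cc C (k-1)) = k-1 := by
    rw [finrank_Cc C (k-1) hn]; omega
  have hXrank : Module.finrank (ZMod 2)
      (Cc C (k-1) ⊔ Cc D (ww C D (k+1)) : Submodule (ZMod 2) (Fin (n-1) → ZMod 2)) = k := by
    omega
  have hlow : Cc C (k-1) < Cc C (k-1) ⊔ Cc D (ww C D (k+1)) := by
    refine lt_of_le_of_ne le_sup_left (fun h => ?_)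
    rw [← h] at hXrank
    omega
  have hhigh : Cc C (k-1) ⊔ Cc D (ww C D (k+1)) < Cc C (k+1) := by
    refine lt_of_le_of_ne (sup_le (Cc_mono C (by omega)) hDle) (fun h => ?_)
    have h2 : Module.finrank (ZMod 2) (Cc C (k+1)) = k+1 := by
      rw [finrank_Cc C (k+1) hn]; omega
    rw [h, h2] at hXrank
    omega
  have hXpart : IsPartitionSubspace n (Cc C (k-1) ⊔ Cc D (ww C D (k+1))) :=
    IsPartitionSubspace.sup (Cc_part C hC hn (k-1)) (Cc_part D hD hn _)
  have hXne : Cc C (k-1) ⊔ Cc D (ww C D (k+1)) ≠ Cc C k := by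
    intro h
    have h1 : Cc D (ww C D (k+1)) ≤ Cc C k := h ▸ le_sup_right
    have h2 : (Cc C k ⊓ Cc D (ww C D (k+1))
        : Submodule (ZMod 2) (Fin (n-1) → ZMod 2)) = Cc D (ww C D (k+1)) :=
      inf_eq_right.2 h1
    have h3 : rr C D k (ww C D (k+1)) = ww C D (k+1) := by rw [rr, h2, hDj_rank]
    omega
  refine ⟨replaceFlag C k _ hn hk1 hk2 hlow hhigh hXrank, ?_, ?_, ?_⟩
  · -- partition subspaces
    intro sl
    have hcc := Cc_slot' (replaceFlag C k _ hn hk1 hk2 hlow hhigh hXrank) sl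
    rcases eq_or_ne ((sl : ℕ) + 1) k with he | hne'
    · rw [← hcc, he, Cc_replaceFlag_same C k _ hn hk1 hk2 hlow hhigh hXrank]
      exact hXpart
    · rw [← hcc, Cc_replaceFlag_ne C k _ hn hk1 hk2 hlow hhigh hXrank hne', Cc_slot' C sl]
      exact hC sl
  · -- adjacency
    have hslpf : k - 1 < n - 2 := by omega
    refine ⟨⟨k-1, hslpf⟩, ?_, ?_⟩
    · show C.1 _ ≠ (replaceFlag C k _ hn hk1 hk2 hlow hhigh hXrank).1 _
      have e1 := Cc_slot' C (⟨k-1, hslpf⟩ : Fin (n-2))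
      have e2 := Cc_slot' (replaceFlag C k _ hn hk1 hk2 hlow hhigh hXrank)
        (⟨k-1, hslpf⟩ : Fin (n-2))
      have hv : ((⟨k-1, hslpf⟩ : Fin (n-2)) : ℕ) + 1 = k := by
        simp only [Fin.val_mk]
        omega
      rw [hv] at e1 e2
      rw [← e1, ← e2, Cc_replaceFlag_same C k _ hn hk1 hk2 hlow hhigh hXrank]
      exact fun h => hXne h.symm
    · intro sl hsl
      by_contra hne'
      rcases eq_or_ne ((sl : ℕ) + 1) k with he | hne'' 
      · apply hne'
        refine Fin.ext ?_
        simp only [Fin.val_mk]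
        omega
      · apply hsl
        rw [← Cc_slot' C sl, ← Cc_slot' (replaceFlag C k _ hn hk1 hk2 hlow hhigh hXrank) sl,
          Cc_replaceFlag_ne C k _ hn hk1 hk2 hlow hhigh hXrank hne'']
  · -- Phi decreases
    have h_eq : ∀ a, a ≠ k →
        Cc C a = Cc (replaceFlag C k _ hn hk1 hk2 hlow hhigh hXrank) a :=
      fun a ha => (Cc_replaceFlag_ne C k _ hn hk1 hk2 hlow hhigh hXrank ha).symm
    have hww' : ww (replaceFlag C k _ hn hk1 hk2 hlow hhigh hXrank) D k ≤ ww C D (k+1) := by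
      apply Nat.find_min' (wwP_exists _ D k)
      right
      have e1 : rr (replaceFlag C k _ hn hk1 hk2 hlow hhigh hXrank) D k (ww C D (k+1))
          = ww C D (k+1) := by
        have hDX : Cc D (ww C D (k+1)) ≤ Cc C (k-1) ⊔ Cc D (ww C D (k+1)) := le_sup_right
        have hcc : (Cc (replaceFlag C k _ hn hk1 hk2 hlow hhigh hXrank) k
            ⊓ Cc D (ww C D (k+1)) : Submodule (ZMod 2) (Fin (n-1) → ZMod 2))
            = Cc D (ww C D (k+1)) := by
          rw [Cc_replaceFlag_same C k _ hn hk1 hk2 hlow hhigh hXrank]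
          exact inf_eq_right.2 hDX
        rw [rr, hcc, hDj_rank]
      have e2 : rr (replaceFlag C k _ hn hk1 hk2 hlow hhigh hXrank) D (k-1) (ww C D (k+1))
          = ww C D (k+1) - 1 := by
        rw [rr_row_eq h_eq (by omega : k-1 ≠ k) _]
        exact hr2
      rw [e1, e2]
      omega
    have hne_w : ww (replaceFlag C k _ hn hk1 hk2 hlow hhigh hXrank) D k ≠ ww C D k := by
      omega
    rcases phi_step hn hk1 hk2 h_eq with ⟨he, _⟩ | ⟨_, hcases⟩
    · exact absurd he hne_w
    · rcases hcases with ⟨_, hphi⟩ | ⟨hbad, _⟩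
      · exact hphi
      · omega

end GoodNeighbor


section Graphs

variable {n : ℕ}

lemma phi_le_walk (hn : 3 ≤ n) (D : VFlag n) :
    ∀ (C : VFlag n) (p : (flagGraph n).Walk C D), Phi C D ≤ p.length := by
  intro C p
  induction p with
  | nil =>
    rw [Phi_self _ hn]
    exact Nat.zero_le _
  | @cons C E D' h p ih =>
    obtain ⟨sl, hsl, huniq⟩ := h
    have hk01 : 1 ≤ (sl : ℕ) + 1 := by omega
    have hk02 : (sl : ℕ) + 1 ≤ n - 2 := by
      have := sl.2
      omega
    have h_eq : ∀ a, a ≠ (sl : ℕ) + 1 → Cc C a = Cc E a := by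
      intro a ha
      rcases Nat.eq_zero_or_pos a with rfl | ha1
      · rw [Cc_zero, Cc_zero]
      rcases le_or_gt a (n-2) with ha2 | ha2
      · rw [Cc_slot C ha1 ha2, Cc_slot E ha1 ha2]
        by_contra hne
        have := huniq ⟨a-1, by omega⟩ hne
        apply ha
        rw [← this]
        simp only [Fin.val_mk]
        omega
      · rw [Cc_top C (by omega) hn, Cc_top E (by omega) hn]
    have hstep : Phi C D' ≤ Phi E D' + 1 := by
      rcases phi_step (D := D') hn hk01 hk02 h_eq with ⟨_, he⟩ | ⟨_, ⟨_, he⟩ | ⟨_, he⟩⟩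
      · omega
      · omega
      · omega
    show Phi C D' ≤ p.length + 1
    omega

lemma exists_walkP (hn : 3 ≤ n) (D : VFlag n)
    (hD : D ∈ {E : VFlag n | ∀ k, IsPartitionSubspace n (E.1 k)}) :
    ∀ N (C : VFlag n) (hC : C ∈ {E : VFlag n | ∀ k, IsPartitionSubspace n (E.1 k)}),
      Phi C D ≤ N →
      ∃ p : ((flagGraph n).induce {E : VFlag n | ∀ k, IsPartitionSubspace n (E.1 k)}).Walk
          ⟨C, hC⟩ ⟨D, hD⟩, p.length ≤ Phi C D := by
  intro N
  induction N with
  | zero =>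
    intro C hC h0
    by_cases hCD : C = D
    · subst hCD
      exact ⟨SimpleGraph.Walk.nil, by simp⟩
    · obtain ⟨C', _, _, hphi⟩ := exists_good_neighbor C D hn hC hD hCD
      omega
  | succ N ih =>
    intro C hC hle
    by_cases hCD : C = D
    · subst hCD
      exact ⟨SimpleGraph.Walk.nil, by simp⟩
    · obtain ⟨C', hC'p, hadj, hphi⟩ := exists_good_neighbor C D hn hC hD hCD
      obtain ⟨p, hp⟩ := ih C' hC'p (by omega)
      refine ⟨SimpleGraph.Walk.cons ?_ p, ?_⟩
      · show (flagGraph n).Adj C C'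
        exact hadj
      · rw [SimpleGraph.Walk.length_cons]
        omega

end Graphs

end PFlag

/-- For complete flags all of whose subspaces are partition subspaces, the graph
distance computed within the induced subgraph on such flags coincides with the
graph distance in the full flag graph. -/
theorem flag_dist_partition_eq_building (n : ℕ) (hn : 3 ≤ n) (C D : VFlag n)
    (hC : ∀ k, IsPartitionSubspace n (C.1 k))
    (hD : ∀ k, IsPartitionSubspace n (D.1 k)) :
    ((flagGraph n).induce {E : VFlag n | ∀ k, IsPartitionSubspace n (E.1 k)}).dist
        ⟨C, hC⟩ ⟨D, hD⟩ = (flagGraph n).dist C D := by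
  obtain ⟨p, hp⟩ := PFlag.exists_walkP hn D hD (PFlag.Phi C D) C hC le_rfl
  have h1 : ((flagGraph n).induce {E : VFlag n | ∀ k, IsPartitionSubspace n (E.1 k)}).dist
      ⟨C, hC⟩ ⟨D, hD⟩ ≤ PFlag.Phi C D :=
    le_trans (SimpleGraph.dist_le p) hp
  have hreachP : ((flagGraph n).induce
      {E : VFlag n | ∀ k, IsPartitionSubspace n (E.1 k)}).Reachable ⟨C, hC⟩ ⟨D, hD⟩ := ⟨p⟩
  obtain ⟨q, hq⟩ := hreachP.exists_walk_length_eq_dist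
  have h2 : (flagGraph n).dist C D
      ≤ ((flagGraph n).induce {E : VFlag n | ∀ k, IsPartitionSubspace n (E.1 k)}).dist
        ⟨C, hC⟩ ⟨D, hD⟩ := by
    have := SimpleGraph.dist_le ((q.map (SimpleGraph.Embedding.induce (G := flagGraph n) {E : VFlag n | ∀ k, IsPartitionSubspace n (E.1 k)}).toHom).copy rfl rfl)
    rwa [SimpleGraph.Walk.length_copy, SimpleGraph.Walk.length_map, hq] at this
  have hreach : (flagGraph n).Reachable C D := ⟨(p.map (SimpleGraph.Embedding.induce (G := flagGraph n) {E : VFlag n | ∀ k, IsPartitionSubspace n (E.1 k)}).toHom).copy rfl rfl⟩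
  obtain ⟨r, hr⟩ := hreach.exists_walk_length_eq_dist
  have h3 : PFlag.Phi C D ≤ (flagGraph n).dist C D := by
    rw [← hr]
    exact PFlag.phi_le_walk hn D C r
  omega
end

section
/- (Link Property for non-crossing partitions.) Let n ≥ 5, let u_1, …, u_{n−1} be a basis of 𝔽_2^{n−1}, and let S be a subset of {1, …, n−1} with ∅ ≠ S ≠ {1, …, n−1}; put U := span{u_i : i ∈ S}. Suppose that for every subset S′ of {1, …, n−1} with ∅ ≠ S′ ≠ {1, …, n−1}, S′ ≠ S, and either S′ ⊂ S or S ⊂ S′, the subspace span{u_i : i ∈ S′} is a non-crossing partition subspace. Then U is a non-crossing partition subspace. -/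
/-- A partition of `{1, …, n}` (as a `Setoid` on `Fin n`) is non-crossing if there
are no `a < b < c < d` with `a, c` in one block and `b, d` in a different block. -/
def IsNonCrossing (n : ℕ) (π : Setoid (Fin n)) : Prop :=
  ∀ a b c d : Fin n, a < b → b < c → c < d → π.r a c → π.r b d → π.r a b

/-- A subspace of `𝔽₂ⁿ⁻¹` is a non-crossing partition subspace if it comes from a
non-crossing partition. -/
def IsNCPartitionSubspace (n : ℕ)
    (U : Submodule (ZMod 2) (Fin (n - 1) → ZMod 2)) : Prop :=
  ∃ π : Setoid (Fin n), IsNonCrossing n π ∧ U = partSubspace n π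

-- ==================== infrastructure ====================

lemma zmod2_add_self (a : ZMod 2) : a + a = 0 := by revert a; decide

lemma fun_add_self {n : ℕ} (x : Fin (n-1) → ZMod 2) : x + x = 0 := by
  funext t; exact zmod2_add_self (x t)

lemma uv_add_self (n : ℕ) (i : Fin n) : unitVec n i + unitVec n i = 0 :=
  fun_add_self _

/-- extension of a vector to `Fin n` coordinates, with last coordinate the checksum. -/
def extv (n : ℕ) (x : Fin (n - 1) → ZMod 2) (e : Fin n) : ZMod 2 :=
  if h : (e : ℕ) < n - 1 then x ⟨(e : ℕ), h⟩ else ∑ k, x k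

lemma extv_add (n : ℕ) (x y : Fin (n-1) → ZMod 2) (e : Fin n) :
    extv n (x + y) e = extv n x e + extv n y e := by
  unfold extv
  split
  · rfl
  · simp [Finset.sum_add_distrib]

lemma extv_smul (n : ℕ) (r : ZMod 2) (x : Fin (n-1) → ZMod 2) (e : Fin n) :
    extv n (r • x) e = r * extv n x e := by
  unfold extv
  split
  · rfl
  · simp [Finset.mul_sum]

lemma extv_unit (n : ℕ) (i e : Fin n) :
    extv n (unitVec n i) e
      = (if e = i then 1 else 0) + (if (e : ℕ) < n - 1 then 0 else 1) := by
  unfold extv unitVec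
  split
  · rename_i h
    simp only [if_pos h, add_zero]
    by_cases hei : (e : ℕ) = (i : ℕ)
    · rw [if_pos hei, if_pos (Fin.ext hei)]
    · rw [if_neg hei, if_neg (fun hh => hei (by rw [hh]))]
  · rename_i h
    have he : (e : ℕ) = n - 1 := by
      have := e.isLt; omega
    by_cases hi : (i : ℕ) < n - 1
    · have hiff : ∀ k : Fin (n-1), (if (k : ℕ) = (i : ℕ) then (1 : ZMod 2) else 0) = (if k = ⟨(i:ℕ), hi⟩ then 1 else 0) := by
        intro k
        by_cases hk : (k : ℕ) = (i : ℕ)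
        · rw [if_pos hk, if_pos (Fin.ext hk)]
        · rw [if_neg hk, if_neg (fun hh => hk (by rw [hh]))]
      have hsum : ∑ k : Fin (n-1), (if (k : ℕ) = (i : ℕ) then (1 : ZMod 2) else 0) = 1 := by
        refine (Finset.sum_congr rfl (fun k _ => hiff k)).trans ?_
        simp
      rw [hsum]
      have hei : ¬ (e = i) := by
        intro hh; subst hh; omega
      rw [if_neg hei]
      rfl
    · have hsum : ∑ k : Fin (n-1), (if (k : ℕ) = (i : ℕ) then (1 : ZMod 2) else 0) = 0 := by
        apply Finset.sum_eq_zero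
        intro k _
        have hk := k.isLt
        have : (k : ℕ) ≠ (i : ℕ) := by omega
        simp [this]
      rw [hsum]
      have hei : e = i := by
        apply Fin.ext
        have := i.isLt
        omega
      rw [if_pos hei]
      rfl

lemma extv_edge (n : ℕ) (i j e : Fin n) :
    extv n (unitVec n i + unitVec n j) e
      = (if e = i then 1 else 0) + (if e = j then 1 else 0) := by
  rw [extv_add, extv_unit, extv_unit]
  have : ∀ a b c : ZMod 2, (a + c) + (b + c) = a + b := by decide
  exact this _ _ _

open Classical in
/-- indicator of `τ.r i c`. -/
noncomputable def relInd (n : ℕ) (τ : Setoid (Fin n)) (i c : Fin n) : ZMod 2 :=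
  if τ.r i c then 1 else 0

open Classical in
lemma relInd_eq_one {n : ℕ} {τ : Setoid (Fin n)} {i c : Fin n} (h : τ.r i c) :
    relInd n τ i c = 1 := if_pos h

open Classical in
lemma relInd_eq_zero {n : ℕ} {τ : Setoid (Fin n)} {i c : Fin n} (h : ¬ τ.r i c) :
    relInd n τ i c = 0 := if_neg h

open Classical in
/-- parity functional of the class of `c` in `τ`. -/
noncomputable def phiF (n : ℕ) (τ : Setoid (Fin n)) (c : Fin n) (x : Fin (n-1) → ZMod 2) : ZMod 2 :=
  ∑ e : Fin n, relInd n τ e c * extv n x e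

lemma extv_zero (n : ℕ) (e : Fin n) : extv n (0 : Fin (n-1) → ZMod 2) e = 0 := by
  unfold extv; split <;> simp

lemma phiF_edge (n : ℕ) (τ : Setoid (Fin n)) (c i j : Fin n) :
    phiF n τ c (unitVec n i + unitVec n j) = relInd n τ i c + relInd n τ j c := by
  classical
  by_cases hij : i = j
  · subst hij
    rw [uv_add_self]
    have : phiF n τ c 0 = 0 := by
      unfold phiF
      apply Finset.sum_eq_zero
      intro e _
      rw [extv_zero, mul_zero]
    rw [this, zmod2_add_self]
  · unfold phiF
    have key : ∀ e : Fin n,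
        relInd n τ e c * extv n (unitVec n i + unitVec n j) e
        = (if e = i then relInd n τ i c else 0)
          + (if e = j then relInd n τ j c else 0) := by
      intro e
      rw [extv_edge]
      by_cases hei : e = i
      · subst hei
        rw [if_pos rfl, if_neg hij, if_pos rfl, if_neg (fun hh : e = j => hij hh)]
        simp
      · rw [if_neg hei, if_neg hei]
        by_cases hej : e = j
        · subst hej
          rw [if_pos rfl, if_pos rfl]
          simp
        · rw [if_neg hej, if_neg hej]
          simp
    rw [Finset.sum_congr rfl (fun e _ => key e), Finset.sum_add_distrib]
    simp

lemma zmod2_eq_of_add_eq_zero {a b : ZMod 2} (h : a + b = 0) : a = b := by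
  revert a b; decide

lemma zmod2_add_eq_zero_of_eq {a b : ZMod 2} (h : a = b) : a + b = 0 := by
  revert a b; decide

lemma zmod2_add_eq_one_of_ne {a b : ZMod 2} (h : a ≠ b) : a + b = 1 := by
  revert a b; decide

lemma phiF_add (n : ℕ) (τ : Setoid (Fin n)) (c : Fin n) (x y : Fin (n-1) → ZMod 2) :
    phiF n τ c (x + y) = phiF n τ c x + phiF n τ c y := by
  unfold phiF
  rw [← Finset.sum_add_distrib]
  apply Finset.sum_congr rfl
  intro e _
  rw [extv_add, mul_add]

lemma phiF_vanish (n : ℕ) (τ : Setoid (Fin n)) (c : Fin n)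
    (x : Fin (n-1) → ZMod 2) (hx : x ∈ partSubspace n τ) : phiF n τ c x = 0 := by
  classical
  refine Submodule.span_induction ?_ ?_ ?_ ?_ hx
  · rintro y ⟨i, j, hij, hrel, rfl⟩
    rw [phiF_edge]
    by_cases hic : τ.r i c
    · have hjc : τ.r j c := τ.trans' (τ.symm' hrel) hic
      rw [relInd_eq_one hic, relInd_eq_one hjc]; decide
    · have hjc : ¬ τ.r j c := fun hh => hic (τ.trans' hrel hh)
      rw [relInd_eq_zero hic, relInd_eq_zero hjc]; decide
  · unfold phiF
    apply Finset.sum_eq_zero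
    intro e _
    rw [extv_zero, mul_zero]
  · intro y z _ _ hy hz
    have : phiF n τ c (y + z) = phiF n τ c y + phiF n τ c z := by
      unfold phiF
      rw [← Finset.sum_add_distrib]
      apply Finset.sum_congr rfl
      intro e _
      rw [extv_add, mul_add]
    rw [this, hy, hz, add_zero]
  · intro r y _ hy
    have : phiF n τ c (r • y) = r * phiF n τ c y := by
      unfold phiF
      rw [Finset.mul_sum]
      apply Finset.sum_congr rfl
      intro e _
      rw [extv_smul]
      ring
    rw [this, hy, mul_zero]

lemma rel_iff_mem (n : ℕ) (τ : Setoid (Fin n)) (i j : Fin n) :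
    τ.r i j ↔ unitVec n i + unitVec n j ∈ partSubspace n τ := by
  classical
  constructor
  · intro hrel
    by_cases hij : i = j
    · subst hij; rw [uv_add_self]; exact Submodule.zero_mem _
    · rcases lt_or_gt_of_ne hij with hlt | hgt
      · exact Submodule.subset_span ⟨i, j, hlt, hrel, rfl⟩
      · rw [add_comm]
        exact Submodule.subset_span ⟨j, i, hgt, τ.symm' hrel, rfl⟩
  · intro hmem
    by_cases hij : i = j
    · subst hij; exact τ.refl' i
    · have h0 := phiF_vanish n τ j _ hmem
      rw [phiF_edge] at h0
      by_cases hij' : τ.r i j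
      · exact hij'
      · exfalso
        rw [relInd_eq_zero hij', relInd_eq_one (τ.refl' j)] at h0
        exact absurd h0 (by decide)

lemma partSubspace_congr {n : ℕ} {σ σ' : Setoid (Fin n)}
    (h : ∀ i j : Fin n, σ.r i j ↔ σ'.r i j) :
    partSubspace n σ = partSubspace n σ' := by
  unfold partSubspace
  congr 1
  ext x
  constructor
  · rintro ⟨i, j, hij, hr, rfl⟩; exact ⟨i, j, hij, (h i j).1 hr, rfl⟩
  · rintro ⟨i, j, hij, hr, rfl⟩; exact ⟨i, j, hij, (h i j).2 hr, rfl⟩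

/-- the setoid associated to a subspace: `i ~ j` iff `e_i + e_j ∈ U`. -/
def spanSetoid (n : ℕ) (U : Submodule (ZMod 2) (Fin (n-1) → ZMod 2)) : Setoid (Fin n) where
  r i j := unitVec n i + unitVec n j ∈ U
  iseqv := by
    constructor
    · intro i; rw [uv_add_self]; exact Submodule.zero_mem _
    · intro i j hij; rwa [add_comm]
    · intro i j k hij hjk
      have : unitVec n i + unitVec n k
          = (unitVec n i + unitVec n j) + (unitVec n j + unitVec n k) := by
        have : ∀ a b c : Fin (n-1) → ZMod 2, (a + b) + (b + c) = a + c := by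
          intro a b c
          funext t
          simp only [Pi.add_apply]
          have : ∀ x y z : ZMod 2, (x + y) + (y + z) = x + z := by decide
          apply this
        rw [this]
      rw [this]
      exact Submodule.add_mem _ hij hjk

lemma spanSetoid_rel {n : ℕ} {U : Submodule (ZMod 2) (Fin (n-1) → ZMod 2)} {i j : Fin n} :
    (spanSetoid n U).r i j ↔ unitVec n i + unitVec n j ∈ U := Iff.rfl

/-- `x` and `y` are separated by the class of `q`. -/
def SepQ (n : ℕ) (π : Setoid (Fin n)) (q : Fin n) (x y : Fin n) : Prop :=
  (∃ z, π.r z q ∧ min x y < z ∧ z < max x y) ∧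
  (∃ z, π.r z q ∧ (z < min x y ∨ max x y < z))

lemma SepQ_symm {n : ℕ} {π : Setoid (Fin n)} {q x y : Fin n} :
    SepQ n π q x y ↔ SepQ n π q y x := by
  unfold SepQ
  rw [min_comm, max_comm]

lemma sep_char {n : ℕ} (π ρ : Setoid (Fin n)) (hNC : IsNonCrossing n ρ)
    (g : Fin n → ZMod 2)
    (hg : ∀ i j, ρ.r i j ↔ (π.r i j ∧ g i = g j))
    (p q : Fin n) (hnpq : ¬ π.r p q)
    (hmono : ∀ i j, π.r i q → π.r j q → g i = g j)
    (α γ z0 z1 : Fin n) (hαp : π.r α p) (hγp : π.r γ p)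
    (hz0 : π.r z0 q) (hz1 : π.r z1 q)
    (hαz0 : α < z0) (hz0γ : z0 < γ) (hside : z1 < α ∨ γ < z1) :
    ∀ x y, π.r x p → π.r y p → (ρ.r x y ↔ ¬ SepQ n π q x y) := by
  -- basic facts
  have hdisj : ∀ x z : Fin n, π.r x p → π.r z q → ¬ π.r x z := by
    intro x z hxp hzq hxz
    exact hnpq (π.trans' (π.symm' hxp) (π.trans' hxz hzq))
  have hne : ∀ x z : Fin n, π.r x p → π.r z q → x ≠ z := by
    intro x z hxp hzq hc
    subst hc
    exact hdisj x x hxp hzq (π.refl' x)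
  have hZrel : ∀ z z' : Fin n, π.r z q → π.r z' q → ρ.r z z' := by
    intro z z' hzq hz'q
    exact (hg z z').2 ⟨π.trans' hzq (π.symm' hz'q), hmono z z' hzq hz'q⟩
  have hXπ : ∀ x y : Fin n, π.r x p → π.r y p → π.r x y := by
    intro x y hxp hyp
    exact π.trans' hxp (π.symm' hyp)
  -- straddle: a related pair in the p-class together with a q-class element strictly
  -- inside its interval forces the whole q-class inside the closed interval
  have hstr : ∀ x y z z' : Fin n, ρ.r x y → π.r x p → π.r y p →
      π.r z q → π.r z' q → min x y < z → z < max x y →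
      ¬ (z' < min x y ∨ max x y < z') := by
    intro x y z z' hxy hxp hyp hzq hz'q h1 h2 hcon
    have hmM : ρ.r (min x y) (max x y) := by
      rcases le_total x y with hle | hle
      · rw [min_eq_left hle, max_eq_right hle]; exact hxy
      · rw [min_eq_right hle, max_eq_left hle]; exact ρ.symm' hxy
    have hmp : π.r (min x y) p := by
      rcases le_total x y with hle | hle
      · rw [min_eq_left hle]; exact hxp
      · rw [min_eq_right hle]; exact hyp
    rcases hcon with hlt | hlt
    · -- z' < min x y ; quad (z', min, z, max)
      have hq := hNC z' (min x y) z (max x y) hlt h1 h2 (hZrel z' z hz'q hzq) hmM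
      exact hdisj (min x y) z' hmp hz'q (π.symm' ((hg _ _).1 hq).1)
    · -- max x y < z' ; quad (min, z, max, z')
      have hq := hNC (min x y) z (max x y) z' h1 h2 hlt hmM (hZrel z z' hzq hz'q)
      exact hdisj (min x y) z hmp hzq ((hg _ _).1 hq).1
  have hsame : ∀ x y : Fin n, ρ.r x y → π.r x p → π.r y p → ¬ SepQ n π q x y := by
    rintro x y hxy hxp hyp ⟨⟨z, hzq, hz1', hz2'⟩, ⟨z', hz'q, hcon⟩⟩
    exact hstr x y z z' hxy hxp hyp hzq hz'q hz1' hz2' hcon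
  have hαγlt : α < γ := lt_trans hαz0 hz0γ
  have hsepαγ : SepQ n π q α γ := by
    constructor
    · refine ⟨z0, hz0, ?_, ?_⟩
      · rw [min_eq_left hαγlt.le]; exact hαz0
      · rw [max_eq_right hαγlt.le]; exact hz0γ
    · refine ⟨z1, hz1, ?_⟩
      rcases hside with hs | hs
      · left; rw [min_eq_left hαγlt.le]; exact hs
      · right; rw [max_eq_right hαγlt.le]; exact hs
  have hgαγ : g α ≠ g γ := by
    intro heq
    exact hsame α γ ((hg α γ).2 ⟨hXπ α γ hαp hγp, heq⟩) hαp hγp hsepαγ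
  -- the big contradiction lemma
  have contra : ∀ x y : Fin n, ρ.r x α → ρ.r y γ → ¬ SepQ n π q x y → False := by
    intro x y hxα hyγ hnsep
    have hxp : π.r x p := π.trans' ((hg _ _).1 hxα).1 hαp
    have hyp : π.r y p := π.trans' ((hg _ _).1 hyγ).1 hγp
    rw [SepQ] at hnsep
    push_neg at hnsep
    rcases Classical.em (∃ z, π.r z q ∧ min x y < z ∧ z < max x y) with hIn | hNoIn
    · -- Case B : inside exists, hence no outside
      have hNoOut : ∀ z, π.r z q → min x y ≤ z ∧ z ≤ max x y := by
        intro z hzq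
        exact hnsep hIn z hzq
      have hB0 := hNoOut z0 hz0
      have hB1 := hNoOut z1 hz1
      rcases hside with hs | hs
      · -- z1 < α
        rcases lt_trichotomy x z1 with hx1 | hx1 | hx1
        · have hq := hNC x z1 α z0 hx1 hs hαz0 hxα (hZrel z1 z0 hz1 hz0)
          exact hdisj x z1 hxp hz1 ((hg _ _).1 hq).1
        · exact hne x z1 hxp hz1 hx1
        · rcases lt_trichotomy x z0 with hx0 | hx0 | hx0
          · rcases le_total x y with hle | hle
            · have hc := hB1.1
              rw [min_eq_left hle] at hc
              exact absurd hc (not_le.2 hx1)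
            · have hc := hB0.2
              rw [max_eq_left hle] at hc
              exact absurd hc (not_le.2 hx0)
          · exact hne x z0 hxp hz0 hx0
          · have hq := hNC z1 α z0 x hs hαz0 hx0 (hZrel z1 z0 hz1 hz0) (ρ.symm' hxα)
            exact hdisj α z1 hαp hz1 (π.symm' ((hg _ _).1 hq).1)
      · -- γ < z1
        rcases lt_trichotomy y z1 with hy1 | hy1 | hy1
        · rcases lt_trichotomy y z0 with hy0 | hy0 | hy0
          · have hq := hNC y z0 γ z1 hy0 hz0γ hs hyγ (hZrel z0 z1 hz0 hz1)
            exact hdisj y z0 hyp hz0 ((hg _ _).1 hq).1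
          · exact hne y z0 hyp hz0 hy0
          · rcases le_total x y with hle | hle
            · have hc := hB1.2
              rw [max_eq_right hle] at hc
              exact absurd hc (not_le.2 hy1)
            · have hc := hB0.1
              rw [min_eq_right hle] at hc
              exact absurd hc (not_le.2 hy0)
        · exact hne y z1 hyp hz1 hy1
        · have hq := hNC z0 γ z1 y hz0γ hs hy1 (hZrel z0 z1 hz0 hz1) (ρ.symm' hyγ)
          exact hdisj γ z0 hγp hz0 (π.symm' ((hg _ _).1 hq).1)
    · -- Case A : no q-class element strictly between x and y
      have hNoIn' : ∀ z, π.r z q → ¬(min x y < z ∧ z < max x y) := by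
        intro z hzq hin
        exact hNoIn ⟨z, hzq, hin⟩
      rcases hside with hs | hs
      · -- z1 < α
        have hXsg : ∀ z, π.r z q → ¬(min x α < z ∧ z < max x α) := by
          intro z hzq hin
          have hst0 := hstr x α z z0 hxα hxp hαp hzq hz0 hin.1 hin.2
          have hst1 := hstr x α z z1 hxα hxp hαp hzq hz1 hin.1 hin.2
          rcases le_total x α with hle | hle
          · have hc : ¬ (max x α < z0) := fun hc => hst0 (Or.inr hc)
            rw [max_eq_right hle] at hc
            exact hc hαz0
          · have hc : ¬ (z1 < min x α) := fun hc => hst1 (Or.inl hc)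
            rw [min_eq_right hle] at hc
            exact hc hs
        have hxz0 : x < z0 := by
          rcases le_total x α with hle | hle
          · exact lt_of_le_of_lt hle hαz0
          · have hc := hXsg z0 hz0
            rw [min_eq_right hle, max_eq_left hle] at hc
            have hxle : ¬ (z0 < x) := fun hcc => hc ⟨hαz0, hcc⟩
            rcases lt_trichotomy x z0 with h' | h' | h'
            · exact h'
            · exact absurd h' (hne x z0 hxp hz0)
            · exact absurd h' hxle
        have hz1x : z1 < x := by
          rcases le_total x α with hle | hle
          · have hc := hXsg z1 hz1
            rw [min_eq_left hle, max_eq_right hle] at hc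
            have hxle : ¬ (x < z1) := fun hcc => hc ⟨hcc, hs⟩
            rcases lt_trichotomy z1 x with h' | h' | h'
            · exact h'
            · exact absurd h'.symm (hne x z1 hxp hz1)
            · exact absurd h' hxle
          · exact lt_of_lt_of_le hs hle
        rcases Classical.em (∃ z, π.r z q ∧ min y γ < z ∧ z < max y γ) with hinY | hnoY
        · obtain ⟨z, hzq, hzi⟩ := hinY
          have hst1 := hstr y γ z z1 hyγ hyp hγp hzq hz1 hzi.1 hzi.2
          rcases le_total y γ with hle | hle
          · have hyz1 : y ≤ z1 := by
              have hc : ¬ (z1 < min y γ) := fun hcc => hst1 (Or.inl hcc)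
              rw [min_eq_left hle] at hc
              exact not_lt.1 hc
            have hyz1' : y < z1 := lt_of_le_of_ne hyz1 (hne y z1 hyp hz1)
            exact hNoIn' z1 hz1 ⟨lt_of_le_of_lt (min_le_right x y) hyz1',
              lt_of_lt_of_le hz1x (le_max_left x y)⟩
          · have hγz1 : γ ≤ z1 := by
              have hc : ¬ (z1 < min y γ) := fun hcc => hst1 (Or.inl hcc)
              rw [min_eq_right hle] at hc
              exact not_lt.1 hc
            have : z1 < γ := lt_trans (lt_trans hs hαz0) hz0γ
            exact absurd hγz1 (not_le.2 this)
        · have hz0y : z0 < y := by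
            rcases le_total y γ with hle | hle
            · have hc : ¬ (min y γ < z0 ∧ z0 < max y γ) := fun hcc => hnoY ⟨z0, hz0, hcc⟩
              rw [min_eq_left hle, max_eq_right hle] at hc
              have : ¬ (y < z0) := fun hcc => hc ⟨hcc, hz0γ⟩
              rcases lt_trichotomy z0 y with h' | h' | h'
              · exact h'
              · exact absurd h'.symm (hne y z0 hyp hz0)
              · exact absurd h' this
            · exact lt_of_lt_of_le hz0γ hle
          exact hNoIn' z0 hz0 ⟨lt_of_le_of_lt (min_le_left x y) hxz0,
            lt_of_lt_of_le hz0y (le_max_right x y)⟩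
      · -- γ < z1
        have hYsg : ∀ z, π.r z q → ¬(min y γ < z ∧ z < max y γ) := by
          intro z hzq hin
          have hst0 := hstr y γ z z0 hyγ hyp hγp hzq hz0 hin.1 hin.2
          have hst1 := hstr y γ z z1 hyγ hyp hγp hzq hz1 hin.1 hin.2
          rcases le_total y γ with hle | hle
          · have hc : ¬ (max y γ < z1) := fun hcc => hst1 (Or.inr hcc)
            rw [max_eq_right hle] at hc
            exact hc hs
          · have hc : ¬ (z0 < min y γ) := fun hcc => hst0 (Or.inl hcc)
            rw [min_eq_right hle] at hc
            exact hc hz0γ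
        have hz0y : z0 < y := by
          rcases le_total y γ with hle | hle
          · have hc := hYsg z0 hz0
            rw [min_eq_left hle, max_eq_right hle] at hc
            have : ¬ (y < z0) := fun hcc => hc ⟨hcc, hz0γ⟩
            rcases lt_trichotomy z0 y with h' | h' | h'
            · exact h'
            · exact absurd h'.symm (hne y z0 hyp hz0)
            · exact absurd h' this
          · exact lt_of_lt_of_le hz0γ hle
        have hyz1 : y < z1 := by
          rcases le_total y γ with hle | hle
          · exact lt_of_le_of_lt hle hs
          · have hc := hYsg z1 hz1
            rw [min_eq_right hle, max_eq_left hle] at hc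
            have : ¬ (z1 < y) := fun hcc => hc ⟨hs, hcc⟩
            rcases lt_trichotomy y z1 with h' | h' | h'
            · exact h'
            · exact absurd h' (hne y z1 hyp hz1)
            · exact absurd h' this
        rcases Classical.em (∃ z, π.r z q ∧ min x α < z ∧ z < max x α) with hinX | hnoX
        · obtain ⟨z, hzq, hzi⟩ := hinX
          have hst1 := hstr x α z z1 hxα hxp hαp hzq hz1 hzi.1 hzi.2
          rcases le_total x α with hle | hle
          · have hc : ¬ (max x α < z1) := fun hcc => hst1 (Or.inr hcc)
            rw [max_eq_right hle] at hc
            exact hc (lt_trans (lt_trans hαz0 hz0γ) hs)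
          · have hz1x : z1 ≤ x := by
              have hc : ¬ (max x α < z1) := fun hcc => hst1 (Or.inr hcc)
              rw [max_eq_left hle] at hc
              exact not_lt.1 hc
            have hz1x' : z1 < x := lt_of_le_of_ne hz1x (Ne.symm (hne x z1 hxp hz1))
            exact hNoIn' z1 hz1 ⟨lt_of_le_of_lt (min_le_right x y) hyz1,
              lt_of_lt_of_le hz1x' (le_max_left x y)⟩
        · have hxz0 : x < z0 := by
            rcases le_total x α with hle | hle
            · exact lt_of_le_of_lt hle hαz0
            · have hc : ¬ (min x α < z0 ∧ z0 < max x α) := fun hcc => hnoX ⟨z0, hz0, hcc⟩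
              rw [min_eq_right hle, max_eq_left hle] at hc
              have : ¬ (z0 < x) := fun hcc => hc ⟨hαz0, hcc⟩
              rcases lt_trichotomy x z0 with h' | h' | h'
              · exact h'
              · exact absurd h' (hne x z0 hxp hz0)
              · exact absurd h' this
          exact hNoIn' z0 hz0 ⟨lt_of_le_of_lt (min_le_left x y) hxz0,
            lt_of_lt_of_le hz0y (le_max_right x y)⟩
  -- conclusion
  intro x y hxp hyp
  constructor
  · intro hxy
    exact hsame x y hxy hxp hyp
  · intro hnsep
    by_contra hnrel
    have hgxy : g x ≠ g y := by
      intro heq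
      exact hnrel ((hg x y).2 ⟨hXπ x y hxp hyp, heq⟩)
    have hcases : (g x = g α ∧ g y = g γ) ∨ (g x = g γ ∧ g y = g α) := by
      have : ∀ a b c d : ZMod 2, a ≠ b → c ≠ d → (c = a ∧ d = b) ∨ (c = b ∧ d = a) := by decide
      exact this (g α) (g γ) (g x) (g y) hgαγ hgxy
    rcases hcases with ⟨h1, h2⟩ | ⟨h1, h2⟩
    · exact contra x y ((hg x α).2 ⟨hXπ x α hxp hαp, h1⟩) ((hg y γ).2 ⟨hXπ y γ hyp hγp, h2⟩) hnsep
    · exact contra y x ((hg y α).2 ⟨hXπ y α hyp hαp, h2⟩) ((hg x γ).2 ⟨hXπ x γ hxp hγp, h1⟩)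
        (fun hc => hnsep (SepQ_symm.1 hc))

lemma fun2_idA {n : ℕ} (a b c : Fin (n-1) → ZMod 2) : (a+b)+(a+c) = b+c := by
  funext t
  simp only [Pi.add_apply]
  have : ∀ x y z : ZMod 2, (x+y)+(x+z) = y+z := by decide
  apply this

lemma fun2_idB {n : ℕ} (a b c : Fin (n-1) → ZMod 2) : (a+b)+(c+a) = b+c := by
  funext t
  simp only [Pi.add_apply]
  have : ∀ x y z : ZMod 2, (x+y)+(z+x) = y+z := by decide
  apply this

lemma fun2_idC {n : ℕ} (a b c : Fin (n-1) → ZMod 2) : (b+a)+(a+c) = b+c := by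
  funext t
  simp only [Pi.add_apply]
  have : ∀ x y z : ZMod 2, (y+x)+(x+z) = y+z := by decide
  apply this

lemma fun2_idD {n : ℕ} (a b c : Fin (n-1) → ZMod 2) : (b+a)+(c+a) = b+c := by
  funext t
  simp only [Pi.add_apply]
  have : ∀ x y z : ZMod 2, (y+x)+(z+x) = y+z := by decide
  apply this

lemma fun2_cancel {n : ℕ} (a b : Fin (n-1) → ZMod 2) : b = a + (a + b) := by
  funext t
  simp only [Pi.add_apply]
  have : ∀ x y : ZMod 2, y = x + (x + y) := by decide
  apply this

lemma edge_ne_zero (n : ℕ) (p q : Fin n) (hpq : p < q) :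
    unitVec n p + unitVec n q ≠ 0 := by
  intro hc
  have hq := q.isLt
  have hlt : (p : ℕ) < (q : ℕ) := hpq
  have hp : (p : ℕ) < n - 1 := by omega
  have hne : (p : ℕ) ≠ (q : ℕ) := by omega
  have := congrFun hc ⟨(p : ℕ), hp⟩
  simp only [Pi.add_apply, Pi.zero_apply, unitVec] at this
  rw [if_pos trivial, if_neg hne] at this
  exact absurd this (by decide)

/-- Link Property for non-crossing partitions: let `n ≥ 5`, let `u₁, …, u_{n-1}` be
a basis of `𝔽₂ⁿ⁻¹` and let `U` be the span of `{uᵢ : i ∈ S}` for a proper nonempty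
subset `S`.  If for every proper nonempty `S'` comparable to (and distinct from)
`S` the subspace spanned by `{uᵢ : i ∈ S'}` is a non-crossing partition subspace,
then so is `U`. -/
theorem linkProperty_noncrossing (n : ℕ) (hn : 5 ≤ n)
    (u : Fin (n - 1) → Fin (n - 1) → ZMod 2)
    (hu1 : LinearIndependent (ZMod 2) u)
    (hu2 : Submodule.span (ZMod 2) (Set.range u) = ⊤)
    (S : Set (Fin (n - 1))) (hS1 : S ≠ ∅) (hS2 : S ≠ Set.univ)
    (h : ∀ S' : Set (Fin (n - 1)), S' ≠ ∅ → S' ≠ Set.univ → S' ≠ S →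
      S' ⊂ S ∨ S ⊂ S' →
      IsNCPartitionSubspace n (Submodule.span (ZMod 2) (u '' S'))) :
    IsNCPartitionSubspace n (Submodule.span (ZMod 2) (u '' S)) := by
  classical
  have hb' : ⊤ ≤ Submodule.span (ZMod 2) (Set.range u) := hu2.ge
  let b : Module.Basis (Fin (n-1)) (ZMod 2) (Fin (n-1) → ZMod 2) := Module.Basis.mk hu1 hb'
  have hb : ∀ t, b t = u t := fun t => Module.Basis.mk_apply hu1 hb' t
  have himg : ∀ T : Set (Fin (n-1)), u '' T = ⇑b '' T := by
    intro T
    apply Set.image_congr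
    intro t _
    rw [hb]
  have hmem : ∀ (T : Set (Fin (n-1))) (x : Fin (n-1) → ZMod 2),
      x ∈ Submodule.span (ZMod 2) (u '' T) ↔ (∀ m, b.repr x m ≠ 0 → m ∈ T) := by
    intro T x
    rw [himg T, Module.Basis.mem_span_image]
    constructor
    · intro hs m hm
      exact hs (Finsupp.mem_support_iff.2 hm)
    · intro hs m hm
      exact hs m (Finsupp.mem_support_iff.1 hm)
  -- membership of basis vectors
  have humem : ∀ (T : Set (Fin (n-1))) (t : Fin (n-1)), t ∈ T →
      u t ∈ Submodule.span (ZMod 2) (u '' T) :=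
    fun T t ht => Submodule.subset_span ⟨t, ht, rfl⟩
  have hrepru : ∀ t m : Fin (n-1), b.repr (u t) m = if t = m then 1 else 0 := by
    intro t m
    rw [← hb, b.repr_self]
    by_cases htm : t = m
    · subst htm; simp
    · simp [Finsupp.single_apply, htm]
  -- an element of S
  obtain ⟨i0, hi0⟩ : ∃ i, i ∈ S := by
    by_contra hc
    push_neg at hc
    exact hS1 (Set.eq_empty_iff_forall_notMem.2 hc)
  set U := Submodule.span (ZMod 2) (u '' S) with hUdef
  set π := spanSetoid n U with hπdef
  by_cases hsing : ∃ i j : Fin (n-1), i ∈ S ∧ j ∈ S ∧ i ≠ j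
  · -- S has at least two elements
    obtain ⟨i, j, hiS, hjS, hij⟩ := hsing
    -- Step 1+2 : U = partSubspace π
    have hU : U = partSubspace n π := by
      apply le_antisymm
      · rw [hUdef]
        apply Submodule.span_le.2
        rintro x ⟨k, hkS, rfl⟩
        set m : Fin (n-1) := if i = k then j else i with hm
        have hmS : m ∈ S := by
          rw [hm]; split <;> assumption
        have hmk : m ≠ k := by
          rw [hm]; split
          · rename_i hh; rw [← hh]; exact Ne.symm hij
          · rename_i hh; exact hh
        have hS'1 : S \ {m} ≠ ∅ := by
          apply Set.nonempty_iff_ne_empty.1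
          exact ⟨k, hkS, fun hc => hmk (by simpa using hc.symm)⟩
        have hS'sub : S \ {m} ⊂ S := by
          constructor
          · exact Set.diff_subset
          · intro hsub
            exact absurd rfl (hsub hmS).2
        have hS'2 : S \ {m} ≠ Set.univ := by
          intro hc
          apply hS2
          apply Set.eq_univ_of_univ_subset
          rw [← hc]
          exact Set.diff_subset
        have hS'3 : S \ {m} ≠ S := by
          intro hc
          rw [← hc] at hmS
          exact hmS.2 rfl
        obtain ⟨σ, hσNC, hσeq⟩ := h (S \ {m}) hS'1 hS'2 hS'3 (Or.inl hS'sub)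
        have hsub2 : partSubspace n σ ≤ partSubspace n π := by
          apply Submodule.span_le.2
          rintro x ⟨p, q, hpq, hrel, rfl⟩
          have hmemU : unitVec n p + unitVec n q ∈ U := by
            have h1 : unitVec n p + unitVec n q ∈ partSubspace n σ :=
              (rel_iff_mem n σ p q).1 hrel
            rw [← hσeq] at h1
            rw [hUdef]
            exact Submodule.span_mono (Set.image_mono Set.diff_subset) h1
          exact Submodule.subset_span ⟨p, q, hpq, hmemU, rfl⟩
        apply hsub2
        rw [← hσeq]
        exact humem _ k ⟨hkS, fun hc => hmk (by simpa using hc.symm)⟩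
      · apply Submodule.span_le.2
        rintro x ⟨p, q, hpq, hrel, rfl⟩
        exact hrel
    by_cases hout : ∃ k k' : Fin (n-1), k ∉ S ∧ k' ∉ S ∧ k ≠ k'
    · -- superset method
      obtain ⟨k, k', hkS, hk'S, hkk'⟩ := hout
      have hNC : IsNonCrossing n π := by
        intro a bb c d hab hbc hcd hac hbd
        have key : ∀ κ κ' : Fin (n-1), κ ∉ S → κ' ∉ S → κ ≠ κ' →
            unitVec n a + unitVec n bb ∈ Submodule.span (ZMod 2) (u '' (insert κ S)) := by
          intro κ κ' hκ hκ' hκκ'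
          have hS'1 : insert κ S ≠ ∅ := by
            intro hc
            have : κ ∈ (∅ : Set (Fin (n-1))) := hc ▸ Set.mem_insert κ S
            exact this
          have hS'2 : insert κ S ≠ Set.univ := by
            intro hc
            have : κ' ∈ insert κ S := hc ▸ Set.mem_univ κ'
            rcases this with hh | hh
            · exact hκκ' hh.symm
            · exact hκ' hh
          have hS'3 : insert κ S ≠ S := by
            intro hc
            exact hκ (hc ▸ Set.mem_insert κ S)
          have hS'4 : S ⊂ insert κ S := Set.ssubset_insert hκ
          obtain ⟨τ, hτNC, hτeq⟩ := h (insert κ S) hS'1 hS'2 hS'3 (Or.inr hS'4)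
          have hUle : U ≤ Submodule.span (ZMod 2) (u '' (insert κ S)) := by
            rw [hUdef]
            exact Submodule.span_mono (Set.image_mono (Set.subset_insert κ S))
          have hτac : τ.r a c := by
            apply (rel_iff_mem n τ a c).2
            rw [← hτeq]
            exact hUle hac
          have hτbd : τ.r bb d := by
            apply (rel_iff_mem n τ bb d).2
            rw [← hτeq]
            exact hUle hbd
          have hτab : τ.r a bb := hτNC a bb c d hab hbc hcd hτac hτbd
          rw [hτeq]
          exact (rel_iff_mem n τ a bb).1 hτab
        have mem1 := key k k' hkS hk'S hkk'
        have mem2 := key k' k hk'S hkS hkk'.symm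
        show unitVec n a + unitVec n bb ∈ U
        rw [hUdef]
        apply (hmem S _).2
        intro m hm
        have h1 := (hmem _ _).1 mem1 m hm
        have h2 := (hmem _ _).1 mem2 m hm
        rcases h1 with hh | hh
        · rcases h2 with hh' | hh'
          · exfalso
            rw [hh] at hh'
            exact hkk' hh'
          · exact hh'
        · exact hh
      exact ⟨π, hNC, hU⟩
    · -- coloring method ; S contains ≥ 3 elements
      push_neg at hout
      have h3 : ∃ m1 m2 m3 : Fin (n-1), m1 ∈ S ∧ m2 ∈ S ∧ m3 ∈ S ∧
          m1 ≠ m2 ∧ m1 ≠ m3 ∧ m2 ≠ m3 := by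
        have h4 : 4 ≤ n - 1 := by omega
        let e0 : Fin (n-1) := ⟨0, by omega⟩
        let e1 : Fin (n-1) := ⟨1, by omega⟩
        let e2 : Fin (n-1) := ⟨2, by omega⟩
        let e3 : Fin (n-1) := ⟨3, by omega⟩
        have d01 : e0 ≠ e1 := by intro hc; exact absurd (congrArg Fin.val hc) (by simp [e0, e1])
        have d02 : e0 ≠ e2 := by intro hc; exact absurd (congrArg Fin.val hc) (by simp [e0, e2])
        have d03 : e0 ≠ e3 := by intro hc; exact absurd (congrArg Fin.val hc) (by simp [e0, e3])
        have d12 : e1 ≠ e2 := by intro hc; exact absurd (congrArg Fin.val hc) (by simp [e1, e2])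
        have d13 : e1 ≠ e3 := by intro hc; exact absurd (congrArg Fin.val hc) (by simp [e1, e3])
        have d23 : e2 ≠ e3 := by intro hc; exact absurd (congrArg Fin.val hc) (by simp [e2, e3])
        by_cases h0 : e0 ∈ S
        · by_cases h1 : e1 ∈ S
          · by_cases h2 : e2 ∈ S
            · exact ⟨e0, e1, e2, h0, h1, h2, d01, d02, d12⟩
            · have h3' : e3 ∈ S := by
                by_contra hc
                exact d23 (hout e2 e3 h2 hc)
              exact ⟨e0, e1, e3, h0, h1, h3', d01, d03, d13⟩
          · have h2 : e2 ∈ S := by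
              by_contra hc
              exact d12 (hout e1 e2 h1 hc)
            have h3' : e3 ∈ S := by
              by_contra hc
              exact d13 (hout e1 e3 h1 hc)
            exact ⟨e0, e2, e3, h0, h2, h3', d02, d03, d23⟩
        · have h1 : e1 ∈ S := by
            by_contra hc
            exact d01 (hout e0 e1 h0 hc)
          have h2 : e2 ∈ S := by
            by_contra hc
            exact d02 (hout e0 e2 h0 hc)
          have h3' : e3 ∈ S := by
            by_contra hc
            exact d03 (hout e0 e3 h0 hc)
          exact ⟨e1, e2, e3, h1, h2, h3', d12, d13, d23⟩
      have hNC : IsNonCrossing n π := by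
        obtain ⟨m1, m2, m3, hm1, hm2, hm3, hd12, hd13, hd23⟩ := h3
        intro a bb c d hab hbc hcd hac hbd
        by_contra hcon
        -- the coloring functions
        set g : Fin (n-1) → Fin n → ZMod 2 := fun m x => b.repr (unitVec n x) m with hgdef
        have hreprv : ∀ (x y : Fin n) (m : Fin (n-1)),
            b.repr (unitVec n x + unitVec n y) m = g m x + g m y := by
          intro x y m
          rw [map_add, Finsupp.add_apply]
        -- σ_m for m ∈ S
        have hsig : ∀ m, m ∈ S → ∃ σ : Setoid (Fin n), IsNonCrossing n σ ∧
            Submodule.span (ZMod 2) (u '' (S \ {m})) = partSubspace n σ ∧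
            (∀ x y : Fin n, σ.r x y ↔ (π.r x y ∧ g m x = g m y)) := by
          intro m hm
          have hk : ∃ k, k ∈ S ∧ k ≠ m := by
            by_cases hmi : m1 = m
            · exact ⟨m2, hm2, fun hc => hd12 (hmi.trans hc.symm)⟩
            · exact ⟨m1, hm1, fun hc => hmi hc⟩
          obtain ⟨k, hkS, hkm⟩ := hk
          have hS'1 : S \ {m} ≠ ∅ := by
            apply Set.nonempty_iff_ne_empty.1
            exact ⟨k, hkS, fun hc => hkm (by simpa using hc)⟩
          have hS'2 : S \ {m} ≠ Set.univ := by
            intro hc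
            apply hS2
            apply Set.eq_univ_of_univ_subset
            rw [← hc]
            exact Set.diff_subset
          have hS'3 : S \ {m} ≠ S := by
            intro hc
            rw [← hc] at hm
            exact hm.2 rfl
          have hS'sub : S \ {m} ⊂ S := by
            constructor
            · exact Set.diff_subset
            · intro hsub
              exact absurd rfl (hsub hm).2
          obtain ⟨σ, hσNC, hσeq⟩ := h (S \ {m}) hS'1 hS'2 hS'3 (Or.inl hS'sub)
          refine ⟨σ, hσNC, hσeq, ?_⟩
          intro x y
          constructor
          · intro hr
            have hmem' : unitVec n x + unitVec n y ∈
                Submodule.span (ZMod 2) (u '' (S \ {m})) := by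
              rw [hσeq]
              exact (rel_iff_mem n σ x y).1 hr
            have hsupp := (hmem _ _).1 hmem'
            have hmemU : unitVec n x + unitVec n y ∈ U := by
              rw [hUdef]
              exact Submodule.span_mono (Set.image_mono Set.diff_subset) hmem'
            refine ⟨hmemU, ?_⟩
            have hz : b.repr (unitVec n x + unitVec n y) m = 0 := by
              by_contra hc
              exact (hsupp m hc).2 rfl
            rw [hreprv] at hz
            exact zmod2_eq_of_add_eq_zero hz
          · rintro ⟨hπxy, hgeq⟩
            have hmemU : unitVec n x + unitVec n y ∈ U := hπxy
            have hmem' : unitVec n x + unitVec n y ∈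
                Submodule.span (ZMod 2) (u '' (S \ {m})) := by
              apply (hmem _ _).2
              intro m' hm'
              have hm'S : m' ∈ S := by
                rw [hUdef] at hmemU
                exact (hmem _ _).1 hmemU m' hm'
              refine ⟨hm'S, ?_⟩
              intro hc
              have hc' : m' = m := by simpa using hc
              subst hc'
              rw [hreprv] at hm'
              exact hm' (zmod2_add_eq_zero_of_eq hgeq)
            rw [hσeq] at hmem'
            exact (rel_iff_mem n σ x y).2 hmem'
        -- splitting predicate
        set SplitsAt : Fin (n-1) → Fin n → Prop :=
          fun m r => ∃ x y : Fin n, π.r x r ∧ π.r y r ∧ g m x ≠ g m y with hSdef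
        -- a coloring splits at most one class
        have claim2 : ∀ m, m ∈ S → ∀ r r' : Fin n, ¬ π.r r r' →
            ¬ (SplitsAt m r ∧ SplitsAt m r') := by
          rintro m hm r r' hnrel ⟨⟨x, y, hxr, hyr, hgxy⟩, ⟨z, w, hzr', hwr', hgzw⟩⟩
          obtain ⟨σ, hσNC, hσeq, hσchar⟩ := hsig m hm
          have hπxy : π.r x y := π.trans' hxr (π.symm' hyr)
          have hπzw : π.r z w := π.trans' hzr' (π.symm' hwr')
          have hxyU : unitVec n x + unitVec n y ∈ U := hπxy
          have hzwU : unitVec n z + unitVec n w ∈ U := hπzw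
          have hV4 : (unitVec n x + unitVec n y) + (unitVec n z + unitVec n w) ∈
              Submodule.span (ZMod 2) (u '' (S \ {m})) := by
            apply (hmem _ _).2
            intro m' hm'
            rw [map_add, Finsupp.add_apply] at hm'
            have hm'S : m' ∈ S := by
              rcases Classical.em (b.repr (unitVec n x + unitVec n y) m' = 0) with h0 | h0
              · rw [h0, zero_add] at hm'
                rw [hUdef] at hzwU
                exact (hmem _ _).1 hzwU m' hm'
              · rw [hUdef] at hxyU
                exact (hmem _ _).1 hxyU m' h0
            refine ⟨hm'S, ?_⟩
            intro hc
            have hc' : m' = m := by simpa using hc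
            subst hc'
            rw [hreprv, hreprv, zmod2_add_eq_one_of_ne hgxy, zmod2_add_eq_one_of_ne hgzw] at hm'
            exact hm' rfl
          rw [hσeq] at hV4
          have h0 := phiF_vanish n σ x _ hV4
          rw [phiF_add, phiF_edge, phiF_edge] at h0
          have hr1 : relInd n σ x x = 1 := relInd_eq_one (σ.refl' x)
          have hr2 : relInd n σ y x = 0 := by
            apply relInd_eq_zero
            intro hr
            exact hgxy (((hσchar y x).1 hr).2).symm
          have hr3 : relInd n σ z x = 0 := by
            apply relInd_eq_zero
            intro hr
            have : π.r r' r := π.trans' (π.symm' hzr') (π.trans' ((hσchar z x).1 hr).1 hxr)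
            exact hnrel (π.symm' this)
          have hr4 : relInd n σ w x = 0 := by
            apply relInd_eq_zero
            intro hr
            have : π.r r' r := π.trans' (π.symm' hwr') (π.trans' ((hσchar w x).1 hr).1 hxr)
            exact hnrel (π.symm' this)
          rw [hr1, hr2, hr3, hr4] at h0
          exact absurd h0 (by decide)
        -- every m ∈ S splits the class of a or the class of bb
        have claim1 : ∀ m, m ∈ S → SplitsAt m a ∨ SplitsAt m bb := by
          intro m hm
          by_contra hc
          push_neg at hc
          obtain ⟨hna, hnb⟩ := hc
          simp only [hSdef] at hna hnb
          push_neg at hna hnb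
          obtain ⟨σ, hσNC, hσeq, hσchar⟩ := hsig m hm
          have hσac : σ.r a c :=
            (hσchar a c).2 ⟨hac, hna a c (π.refl' a) (π.symm' hac)⟩
          have hσbd : σ.r bb d :=
            (hσchar bb d).2 ⟨hbd, hnb bb d (π.refl' bb) (π.symm' hbd)⟩
          have hσab := hσNC a bb c d hab hbc hcd hσac hσbd
          exact hcon ((hσchar a bb).1 hσab).1
        -- two colorings splitting the same class are forced to give the same partition
        have finalkill : ∀ m m' : Fin (n-1), m ∈ S → m' ∈ S → m ≠ m' →
            ∀ p q α γ z0 z1 : Fin n, ¬ π.r p q → π.r α p → π.r γ p →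
            π.r z0 q → π.r z1 q → α < z0 → z0 < γ → (z1 < α ∨ γ < z1) →
            SplitsAt m p → SplitsAt m' p → False := by
          intro m m' hm hm' hmm' p q α γ z0 z1 hnpq hαp hγp hz0 hz1 hαz0 hz0γ hside hsp hsp'
          obtain ⟨σ, hσNC, hσeq, hσchar⟩ := hsig m hm
          obtain ⟨σ', hσ'NC, hσ'eq, hσ'char⟩ := hsig m' hm'
          have hmono : ∀ x y : Fin n, π.r x q → π.r y q → g m x = g m y := by
            intro x y hxq hyq
            by_contra hne'
            exact claim2 m hm p q hnpq ⟨hsp, x, y, hxq, hyq, hne'⟩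
          have hmono' : ∀ x y : Fin n, π.r x q → π.r y q → g m' x = g m' y := by
            intro x y hxq hyq
            by_contra hne'
            exact claim2 m' hm' p q hnpq ⟨hsp', x, y, hxq, hyq, hne'⟩
          have hother : ∀ x y : Fin n, π.r x y → ¬ π.r x p → g m x = g m y := by
            intro x y hπxy hxp
            by_contra hne'
            exact claim2 m hm x p (fun hr => hxp hr) ⟨⟨x, y, π.refl' x, π.symm' hπxy, hne'⟩, hsp⟩
          have hother' : ∀ x y : Fin n, π.r x y → ¬ π.r x p → g m' x = g m' y := by
            intro x y hπxy hxp
            by_contra hne'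
            exact claim2 m' hm' x p (fun hr => hxp hr) ⟨⟨x, y, π.refl' x, π.symm' hπxy, hne'⟩, hsp'⟩
          have SC := sep_char π σ hσNC (g m) hσchar p q hnpq hmono α γ z0 z1
            hαp hγp hz0 hz1 hαz0 hz0γ hside
          have SC' := sep_char π σ' hσ'NC (g m') hσ'char p q hnpq hmono' α γ z0 z1
            hαp hγp hz0 hz1 hαz0 hz0γ hside
          have hrelEq : ∀ x y : Fin n, σ.r x y ↔ σ'.r x y := by
            intro x y
            by_cases hπxy : π.r x y
            · by_cases hxp : π.r x p
              · have hyp : π.r y p := π.trans' (π.symm' hπxy) hxp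
                rw [SC x y hxp hyp, SC' x y hxp hyp]
              · have e1 : σ.r x y := (hσchar x y).2 ⟨hπxy, hother x y hπxy hxp⟩
                have e2 : σ'.r x y := (hσ'char x y).2 ⟨hπxy, hother' x y hπxy hxp⟩
                exact iff_of_true e1 e2
            · exact iff_of_false (fun hr => hπxy ((hσchar x y).1 hr).1)
                (fun hr => hπxy ((hσ'char x y).1 hr).1)
          have hPeq : partSubspace n σ = partSubspace n σ' := partSubspace_congr hrelEq
          rw [← hσeq, ← hσ'eq] at hPeq
          have hmem1 : u m' ∈ Submodule.span (ZMod 2) (u '' (S \ {m})) :=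
            humem _ m' ⟨hm', fun hc => hmm' (Set.mem_singleton_iff.1 hc).symm⟩
          rw [hPeq] at hmem1
          have hne0 : b.repr (u m') m' ≠ 0 := by
            rw [hrepru]
            simp
          have := (hmem _ _).1 hmem1 m' hne0
          exact this.2 rfl
        -- pigeonhole among m1 m2 m3
        have applyA : ∀ m m' : Fin (n-1), m ∈ S → m' ∈ S → m ≠ m' →
            SplitsAt m a → SplitsAt m' a → False := by
          intro m m' hm hm' hmm' h1 h2
          exact finalkill m m' hm hm' hmm' a bb a c bb d hcon (π.refl' a) (π.symm' hac)
            (π.refl' bb) (π.symm' hbd) hab hbc (Or.inr hcd) h1 h2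
        have applyB : ∀ m m' : Fin (n-1), m ∈ S → m' ∈ S → m ≠ m' →
            SplitsAt m bb → SplitsAt m' bb → False := by
          intro m m' hm hm' hmm' h1 h2
          exact finalkill m m' hm hm' hmm' bb a bb d c a (fun hr => hcon (π.symm' hr))
            (π.refl' bb) (π.symm' hbd) (π.symm' hac) (π.refl' a) hbc hcd (Or.inl hab) h1 h2
        rcases claim1 m1 hm1 with hA1 | hB1 <;>
          rcases claim1 m2 hm2 with hA2 | hB2 <;>
            rcases claim1 m3 hm3 with hA3 | hB3
        · exact applyA m1 m2 hm1 hm2 hd12 hA1 hA2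
        · exact applyA m1 m2 hm1 hm2 hd12 hA1 hA2
        · exact applyA m1 m3 hm1 hm3 hd13 hA1 hA3
        · exact applyB m2 m3 hm2 hm3 hd23 hB2 hB3
        · exact applyA m2 m3 hm2 hm3 hd23 hA2 hA3
        · exact applyB m1 m3 hm1 hm3 hd13 hB1 hB3
        · exact applyB m1 m2 hm1 hm2 hd12 hB1 hB2
        · exact applyB m1 m2 hm1 hm2 hd12 hB1 hB2
      exact ⟨π, hNC, hU⟩
  · -- S = {i0}
    push_neg at hsing
    have hSsing : S = {i0} := by
      ext t
      constructor
      · intro ht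
        by_contra hne
        exact hne (hsing t i0 ht hi0)
      · rintro rfl
        exact hi0
    have h4 : 4 ≤ n - 1 := by omega
    by_cases hedge : ∃ p q : Fin n, p < q ∧ u i0 = unitVec n p + unitVec n q
    · -- u i0 is an edge vector : use the pair partition
      obtain ⟨p, q, hpq, hupq⟩ := hedge
      have hpqne : p ≠ q := ne_of_lt hpq
      set σ : Setoid (Fin n) :=
        ⟨fun x y => x = y ∨ (x = p ∧ y = q) ∨ (x = q ∧ y = p), by
          constructor
          · intro x; exact Or.inl rfl
          · rintro x y (rfl | ⟨rfl, rfl⟩ | ⟨rfl, rfl⟩)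
            · exact Or.inl rfl
            · exact Or.inr (Or.inr ⟨rfl, rfl⟩)
            · exact Or.inr (Or.inl ⟨rfl, rfl⟩)
          · rintro x y z hxy hyz
            rcases hxy with rfl | ⟨hx, hy⟩ | ⟨hx, hy⟩
            · exact hyz
            · subst hx; subst hy
              rcases hyz with rfl | ⟨h1, h2⟩ | ⟨h1, h2⟩
              · exact Or.inr (Or.inl ⟨rfl, rfl⟩)
              · exact absurd h1 (Ne.symm hpqne)
              · exact Or.inl h2.symm
            · subst hx; subst hy
              rcases hyz with rfl | ⟨h1, h2⟩ | ⟨h1, h2⟩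
              · exact Or.inr (Or.inr ⟨rfl, rfl⟩)
              · exact Or.inl h2.symm
              · exact absurd h1 hpqne⟩ with hσdef
      have hNCσ : IsNonCrossing n σ := by
        intro a bb c d hab hbc hcd hacr hbdr
        rcases hacr with heq | ⟨h1, h2⟩ | ⟨h1, h2⟩
        · exact absurd heq (ne_of_lt (lt_trans hab hbc))
        · rcases hbdr with heq | ⟨h3, h4'⟩ | ⟨h3, h4'⟩
          · exact absurd heq (ne_of_lt (lt_trans hbc hcd))
          · exact absurd (h1.trans h3.symm) (ne_of_lt hab)
          · exact absurd (h3.trans h2.symm) (ne_of_lt hbc)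
        · have hlt : a < c := lt_trans hab hbc
          rw [h1, h2] at hlt
          exact absurd hpq (not_lt.2 hlt.le)
      refine ⟨σ, hNCσ, ?_⟩
      have hgen : {x | ∃ i' j' : Fin n, i' < j' ∧ σ.r i' j' ∧
          x = unitVec n i' + unitVec n j'} = {unitVec n p + unitVec n q} := by
        ext x
        constructor
        · rintro ⟨i', j', hij', hrel, rfl⟩
          rcases hrel with rfl | ⟨rfl, rfl⟩ | ⟨rfl, rfl⟩
          · exact absurd rfl (ne_of_lt hij')
          · rfl
          · exact absurd hij' (not_lt.2 hpq.le)
        · rintro rfl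
          exact ⟨p, q, hpq, Or.inr (Or.inl ⟨rfl, rfl⟩), rfl⟩
      have himgS : u '' S = {u i0} := by
        rw [hSsing, Set.image_singleton]
      show U = partSubspace n σ
      rw [hUdef, himgS]
      unfold partSubspace
      rw [hgen, hupq]
    · -- u i0 is not an edge vector : contradiction with n ≥ 5
      exfalso
      let e0 : Fin (n-1) := ⟨0, by omega⟩
      let e1 : Fin (n-1) := ⟨1, by omega⟩
      let e2 : Fin (n-1) := ⟨2, by omega⟩
      have d01 : e0 ≠ e1 := fun hc => absurd (congrArg Fin.val hc) (by simp [e0, e1])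
      have d02 : e0 ≠ e2 := fun hc => absurd (congrArg Fin.val hc) (by simp [e0, e2])
      have d12 : e1 ≠ e2 := fun hc => absurd (congrArg Fin.val hc) (by simp [e1, e2])
      have hthird : ∀ k : Fin (n-1), ∃ k'' : Fin (n-1), k'' ≠ i0 ∧ k'' ≠ k := by
        intro k
        by_cases h0 : e0 ≠ i0 ∧ e0 ≠ k
        · exact ⟨e0, h0.1, h0.2⟩
        · by_cases h1 : e1 ≠ i0 ∧ e1 ≠ k
          · exact ⟨e1, h1.1, h1.2⟩
          · push_neg at h0 h1
            refine ⟨e2, ?_, ?_⟩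
            · intro hc
              have he0 : e0 = k := h0 (fun hc2 => d02 (hc2.trans hc.symm))
              have he1 : e1 = k := h1 (fun hc2 => d12 (hc2.trans hc.symm))
              exact d01 (he0.trans he1.symm)
            · intro hc
              have he0 : e0 = i0 := by
                by_contra hc2
                exact d02 ((h0 hc2).trans hc.symm)
              have he1 : e1 = i0 := by
                by_contra hc2
                exact d12 ((h1 hc2).trans hc.symm)
              exact d01 (he0.trans he1.symm)
      have hnotinS : ∀ t : Fin (n-1), t ≠ i0 → t ∉ S := by
        intro t ht hc
        rw [hSsing] at hc
        exact ht hc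
      have hedge' : ∀ a b2 : Fin n, a ≠ b2 → u i0 ≠ unitVec n a + unitVec n b2 := by
        intro a b2 hne hc
        rcases lt_or_gt_of_ne hne with hlt | hgt
        · exact hedge ⟨a, b2, hlt, hc⟩
        · exact hedge ⟨b2, a, hgt, by rw [hc, add_comm]⟩
      have hui0ne : u i0 ≠ 0 := hu1.ne_zero i0
      have huinj : ∀ t t' : Fin (n-1), u t = u t' → t = t' := fun t t' h' => hu1.injective h'
      have hkey : ∀ k : Fin (n-1), k ≠ i0 → ∃ p1 q1 p2 q2 : Fin n, p1 < q1 ∧ p2 < q2 ∧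
          u k = unitVec n p1 + unitVec n q1 ∧
          u i0 = (unitVec n p1 + unitVec n q1) + (unitVec n p2 + unitVec n q2) := by
        intro k hki0
        obtain ⟨k'', hk''1, hk''2⟩ := hthird k
        have hkS : k ∉ S := hnotinS k hki0
        have hS'1 : insert k S ≠ ∅ := by
          intro hc
          exact (hc ▸ Set.mem_insert k S : k ∈ (∅ : Set (Fin (n-1))))
        have hS'2 : insert k S ≠ Set.univ := by
          intro hc
          have hm : k'' ∈ insert k S := hc ▸ Set.mem_univ k''
          rcases hm with hh | hh
          · exact hk''2 hh
          · exact hnotinS k'' hk''1 hh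
        have hS'3 : insert k S ≠ S := fun hc => hkS (hc ▸ Set.mem_insert k S)
        obtain ⟨τ, hτNC, hτeq⟩ := h (insert k S) hS'1 hS'2 hS'3 (Or.inr (Set.ssubset_insert hkS))
        have himg2 : u '' insert k S = {u k, u i0} := by
          rw [hSsing, Set.image_insert_eq, Set.image_singleton]
        have hspan2 : ∀ x, x ∈ Submodule.span (ZMod 2) (u '' insert k S) →
            x = 0 ∨ x = u k ∨ x = u i0 ∨ x = u k + u i0 := by
          intro x hx
          rw [himg2, Submodule.mem_span_pair] at hx
          obtain ⟨cc, dd, hcd⟩ := hx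
          have hc2 : ∀ e : ZMod 2, e = 0 ∨ e = 1 := by decide
          rcases hc2 cc with rfl | rfl
          · rcases hc2 dd with rfl | rfl
            · left; rw [← hcd]; simp
            · right; right; left; rw [← hcd]; simp
          · rcases hc2 dd with rfl | rfl
            · right; left; rw [← hcd]; simp
            · right; right; right; rw [← hcd]; simp
        have hui0m : u i0 ∈ partSubspace n τ := by
          rw [← hτeq]
          exact humem _ i0 (Set.mem_insert_iff.2 (Or.inr hi0))
        have hgenopt : ∀ x, (∃ i' j' : Fin n, i' < j' ∧ τ.r i' j' ∧
            x = unitVec n i' + unitVec n j') → x = u k ∨ x = u k + u i0 := by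
          rintro x ⟨i', j', hij', hrel, rfl⟩
          have hx : unitVec n i' + unitVec n j' ∈ partSubspace n τ :=
            Submodule.subset_span ⟨i', j', hij', hrel, rfl⟩
          rw [← hτeq] at hx
          rcases hspan2 _ hx with h0 | h1 | h2 | h3
          · exact absurd h0 (edge_ne_zero n i' j' hij')
          · exact Or.inl h1
          · exact absurd h2.symm (hedge' i' j' (ne_of_lt hij'))
          · exact Or.inr h3
        have hg1 : ∃ p1 q1 : Fin n, p1 < q1 ∧ u k = unitVec n p1 + unitVec n q1 := by
          by_contra hc
          push_neg at hc
          have hle : partSubspace n τ ≤ Submodule.span (ZMod 2) {u k + u i0} := by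
            apply Submodule.span_le.2
            rintro x ⟨i', j', hij', hrel, rfl⟩
            rcases hgenopt _ ⟨i', j', hij', hrel, rfl⟩ with h1 | h2
            · exact absurd h1.symm (hc i' j' hij')
            · rw [h2]; exact Submodule.mem_span_singleton_self _
          have hmem0 := hle hui0m
          rw [Submodule.mem_span_singleton] at hmem0
          obtain ⟨c, hc2⟩ := hmem0
          have hcc : ∀ e : ZMod 2, e = 0 ∨ e = 1 := by decide
          rcases hcc c with rfl | rfl
          · rw [zero_smul] at hc2; exact hui0ne hc2.symm
          · rw [one_smul] at hc2
            have hk0 : u k = 0 := by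
              have h5 : (u k + u i0) + u i0 = u k := by
                rw [add_assoc, fun_add_self, add_zero]
              rw [hc2, fun_add_self] at h5
              exact h5.symm
            exact (hu1.ne_zero k) hk0
        have hg2 : ∃ p2 q2 : Fin n, p2 < q2 ∧ u k + u i0 = unitVec n p2 + unitVec n q2 := by
          by_contra hc
          push_neg at hc
          have hle : partSubspace n τ ≤ Submodule.span (ZMod 2) {u k} := by
            apply Submodule.span_le.2
            rintro x ⟨i', j', hij', hrel, rfl⟩
            rcases hgenopt _ ⟨i', j', hij', hrel, rfl⟩ with h1 | h2
            · rw [h1]; exact Submodule.mem_span_singleton_self _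
            · exact absurd h2.symm (hc i' j' hij')
          have hmem0 := hle hui0m
          rw [Submodule.mem_span_singleton] at hmem0
          obtain ⟨c, hc2⟩ := hmem0
          have hcc : ∀ e : ZMod 2, e = 0 ∨ e = 1 := by decide
          rcases hcc c with rfl | rfl
          · rw [zero_smul] at hc2; exact hui0ne hc2.symm
          · rw [one_smul] at hc2
            exact hki0 (huinj k i0 hc2)
        obtain ⟨p1, q1, hlt1, he1⟩ := hg1
        obtain ⟨p2, q2, hlt2, he2⟩ := hg2
        refine ⟨p1, q1, p2, q2, hlt1, hlt2, he1, ?_⟩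
        rw [← he1, ← he2]
        exact fun2_cancel (u k) (u i0)
      have hdisj4 : ∀ p1 q1 p2 q2 : Fin n, p1 < q1 → p2 < q2 →
          u i0 = (unitVec n p1 + unitVec n q1) + (unitVec n p2 + unitVec n q2) →
          p1 ≠ p2 ∧ p1 ≠ q2 ∧ q1 ≠ p2 ∧ q1 ≠ q2 := by
        intro p1 q1 p2 q2 h1 h2 heq
        have hv12 : unitVec n p1 + unitVec n q1 ≠ unitVec n p2 + unitVec n q2 := by
          intro hc
          rw [hc, fun_add_self] at heq
          exact hui0ne heq
        refine ⟨?_, ?_, ?_, ?_⟩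
        · intro hc
          rw [hc] at heq
          rw [fun2_idA] at heq
          have hne : q1 ≠ q2 := by
            intro hc2
            exact hv12 (by rw [hc, hc2])
          exact hedge' q1 q2 hne heq
        · intro hc
          rw [hc] at heq
          rw [fun2_idB] at heq
          have hne : q1 ≠ p2 := by
            intro hc2
            exact hv12 (by rw [hc, hc2]; exact add_comm _ _)
          exact hedge' q1 p2 hne heq
        · intro hc
          rw [hc] at heq
          rw [fun2_idC] at heq
          have hne : p1 ≠ q2 := by
            intro hc2
            exact hv12 (by rw [hc, hc2]; exact add_comm _ _)
          exact hedge' p1 q2 hne heq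
        · intro hc
          rw [hc] at heq
          rw [fun2_idD] at heq
          have hne : p1 ≠ p2 := by
            intro hc2
            exact hv12 (by rw [hc, hc2])
          exact hedge' p1 p2 hne heq
      have hat4gen : ∀ a' b' c' d' : Fin n, a' ≠ b' → c' ≠ d' → a' ≠ c' → a' ≠ d' →
          b' ≠ c' → b' ≠ d' →
          ∀ e : Fin n, extv n ((unitVec n a' + unitVec n b') + (unitVec n c' + unitVec n d')) e
            = if e = a' ∨ e = b' ∨ e = c' ∨ e = d' then 1 else 0 := by
        intro a' b' c' d' hab hcd hac had hbc hbd e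
        rw [extv_add, extv_edge, extv_edge]
        by_cases h1 : e = a'
        · subst h1
          rw [if_pos rfl, if_neg hab, if_neg hac, if_neg had, if_pos (Or.inl rfl)]
          decide
        · rw [if_neg h1]
          by_cases h2 : e = b'
          · subst h2
            rw [if_pos rfl, if_neg hbc, if_neg hbd, if_pos (Or.inr (Or.inl rfl))]
            decide
          · rw [if_neg h2]
            by_cases h3 : e = c'
            · subst h3
              rw [if_pos rfl, if_neg hcd, if_pos (Or.inr (Or.inr (Or.inl rfl)))]
              decide
            · rw [if_neg h3]
              by_cases h4' : e = d'
              · subst h4'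
                rw [if_pos rfl, if_pos (Or.inr (Or.inr (Or.inr rfl)))]
                decide
              · rw [if_neg h4', if_neg (by tauto : ¬ (e = a' ∨ e = b' ∨ e = c' ∨ e = d'))]
                decide
      obtain ⟨k0, hk01, _⟩ := hthird i0
      obtain ⟨P1, Q1, P2, Q2, hPQ1, hPQ2, hK0u, hK0eq⟩ := hkey k0 hk01
      obtain ⟨dA, dB, dC, dD⟩ := hdisj4 P1 Q1 P2 Q2 hPQ1 hPQ2 hK0eq
      have dPQ1 : P1 ≠ Q1 := ne_of_lt hPQ1
      have dPQ2 : P2 ≠ Q2 := ne_of_lt hPQ2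
      set w1 : Fin (n-1) → ZMod 2 := unitVec n P1 + unitVec n Q1 with hw1
      set w2 : Fin (n-1) → ZMod 2 := unitVec n P1 + unitVec n P2 with hw2
      set w3 : Fin (n-1) → ZMod 2 := unitVec n P1 + unitVec n Q2 with hw3
      set W3 : Submodule (ZMod 2) (Fin (n-1) → ZMod 2) :=
        Submodule.span (ZMod 2) ({w1, w2, w3} : Set (Fin (n-1) → ZMod 2)) with hW3
      have hbase : ∀ e : Fin n, (e = P1 ∨ e = Q1 ∨ e = P2 ∨ e = Q2) →
          unitVec n P1 + unitVec n e ∈ W3 := by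
        rintro e (rfl | rfl | rfl | rfl)
        · rw [uv_add_self]
          exact Submodule.zero_mem _
        · exact Submodule.subset_span (Set.mem_insert _ _)
        · exact Submodule.subset_span (Set.mem_insert_of_mem _ (Set.mem_insert _ _))
        · exact Submodule.subset_span
            (Set.mem_insert_of_mem _ (Set.mem_insert_of_mem _ rfl))
      have hedgeW : ∀ a' b' : Fin n, (a' = P1 ∨ a' = Q1 ∨ a' = P2 ∨ a' = Q2) →
          (b' = P1 ∨ b' = Q1 ∨ b' = P2 ∨ b' = Q2) →
          unitVec n a' + unitVec n b' ∈ W3 := by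
        intro a' b' ha hbb
        have hrw : unitVec n a' + unitVec n b' =
            (unitVec n P1 + unitVec n a') + (unitVec n P1 + unitVec n b') :=
          (fun2_idA _ _ _).symm
        rw [hrw]
        exact Submodule.add_mem _ (hbase a' ha) (hbase b' hbb)
      have hatK0 := hat4gen P1 Q1 P2 Q2 dPQ1 dPQ2 dA dB dC dD
      have hall : ∀ t : Fin (n-1), u t ∈ W3 := by
        intro t
        by_cases ht : t = i0
        · subst ht
          rw [hK0eq]
          exact Submodule.add_mem _
            (hedgeW P1 Q1 (Or.inl rfl) (Or.inr (Or.inl rfl)))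
            (hedgeW P2 Q2 (Or.inr (Or.inr (Or.inl rfl))) (Or.inr (Or.inr (Or.inr rfl))))
        · obtain ⟨p1, q1, p2, q2, hl1, hl2, hteq, hteq2⟩ := hkey t ht
          obtain ⟨dA', dB', dC', dD'⟩ := hdisj4 p1 q1 p2 q2 hl1 hl2 hteq2
          have hatk := hat4gen p1 q1 p2 q2 (ne_of_lt hl1) (ne_of_lt hl2) dA' dB' dC' dD'
          have hp1mem : p1 = P1 ∨ p1 = Q1 ∨ p1 = P2 ∨ p1 = Q2 := by
            by_contra hc
            have hv1 : extv n (u i0) p1 = 1 := by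
              rw [hteq2, hatk p1, if_pos (Or.inl rfl)]
            have hv2 : extv n (u i0) p1 = 0 := by
              rw [hK0eq, hatK0 p1, if_neg hc]
            rw [hv1] at hv2
            exact absurd hv2 (by decide)
          have hq1mem : q1 = P1 ∨ q1 = Q1 ∨ q1 = P2 ∨ q1 = Q2 := by
            by_contra hc
            have hv1 : extv n (u i0) q1 = 1 := by
              rw [hteq2, hatk q1, if_pos (Or.inr (Or.inl rfl))]
            have hv2 : extv n (u i0) q1 = 0 := by
              rw [hK0eq, hatK0 q1, if_neg hc]
            rw [hv1] at hv2
            exact absurd hv2 (by decide)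
          rw [hteq]
          exact hedgeW p1 q1 hp1mem hq1mem
      have htople : (⊤ : Submodule (ZMod 2) (Fin (n-1) → ZMod 2)) ≤ W3 := by
        rw [← hu2]
        apply Submodule.span_le.2
        rintro x ⟨t, rfl⟩
        exact hall t
      have hWtop : W3 = ⊤ := le_antisymm le_top htople
      have hfin1 : Module.finrank (ZMod 2) (Fin (n-1) → ZMod 2) = n - 1 := by
        rw [Module.finrank_eq_card_basis b, Fintype.card_fin]
      have hfin2 : Module.finrank (ZMod 2) W3 ≤ 3 := by
        rw [hW3]
        refine le_trans (finrank_span_le_card _) ?_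
        rw [Set.toFinset_insert, Set.toFinset_insert, Set.toFinset_singleton]
        refine le_trans (Finset.card_insert_le _ _) ?_
        refine le_trans (Nat.add_le_add_right (Finset.card_insert_le _ _) 1) ?_
        simp
      have hfin3 : Module.finrank (ZMod 2) W3 = n - 1 := by
        rw [hWtop, finrank_top, hfin1]
      rw [hfin3] at hfin2
      omega
end

section
/- (Link Property for partitions.) Let n ≥ 5, let u_1, …, u_{n−1} be a basis of 𝔽_2^{n−1}, and let S be a subset of {1, …, n−1} with ∅ ≠ S ≠ {1, …, n−1}; put U := span{u_i : i ∈ S}. Suppose that for every subset S′ of {1, …, n−1} with ∅ ≠ S′ ≠ {1, …, n−1}, S′ ≠ S, and either S′ ⊂ S or S ⊂ S′, the subspace span{u_i : i ∈ S′} is a partition subspace. Then U is a partition subspace. -/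
namespace LinkProof

lemma zA : ∀ a : ZMod 2, a + a = 0 := by decide
lemma zB : ∀ a b c : ZMod 2, a + b + (b + c) = a + c := by decide
lemma zC : ∀ a b : ZMod 2, a + (b + a) = b := by decide
lemma zJ : ∀ a b : ZMod 2, a + (a + b) = b := by decide
lemma zD : ∀ a b c : ZMod 2, (a + b) + (a + c) = b + c := by decide
lemma zF : ∀ a b c : ZMod 2, (a + b) + (c + a) = b + c := by decide
lemma zG : ∀ a b c : ZMod 2, (a + b) + (c + b) = a + c := by decide
lemma zH : ∀ a b : ZMod 2, (a + b) + a = b := by decide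
lemma zI : ∀ a b : ZMod 2, (a + b) + b = a := by decide
lemma zmod2_cases : ∀ a : ZMod 2, a = 0 ∨ a = 1 := by decide

variable {n : ℕ}

lemma addSelf (x : Fin (n - 1) → ZMod 2) : x + x = 0 := by
  funext t; simp only [Pi.add_apply, Pi.zero_apply]; exact zA _

/-- unit vector in coordinates `Fin (n-1)` -/
def myE (n : ℕ) (p : Fin (n - 1)) : Fin (n - 1) → ZMod 2 :=
  fun t => if t = p then 1 else 0

lemma unitVec_eq_myE (a : Fin n) (h : (a : ℕ) < n - 1) :
    unitVec n a = myE n ⟨(a : ℕ), h⟩ := by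
  funext t; simp [unitVec, myE, Fin.ext_iff]

lemma unitVec_eq_zero (a : Fin n) (h : ¬ (a : ℕ) < n - 1) : unitVec n a = 0 := by
  funext t
  have ht := t.isLt
  simp only [unitVec, Pi.zero_apply, ite_eq_right_iff]
  intro h'; omega

/-- "partition vector": `e_p + e_q` (p ≠ q) or a single `e_p`. -/
def PV (n : ℕ) (x : Fin (n - 1) → ZMod 2) : Prop :=
  (∃ p q : Fin (n - 1), p ≠ q ∧ x = myE n p + myE n q) ∨ (∃ p : Fin (n - 1), x = myE n p)

lemma PV_of_ne (a b : Fin n) (hab : a ≠ b) : PV n (unitVec n a + unitVec n b) := by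
  by_cases ha : (a : ℕ) < n - 1 <;> by_cases hb : (b : ℕ) < n - 1
  · left
    refine ⟨⟨a, ha⟩, ⟨b, hb⟩, ?_, by rw [unitVec_eq_myE a ha, unitVec_eq_myE b hb]⟩
    simp only [ne_eq, Fin.mk.injEq]
    exact fun hc => hab (Fin.ext hc)
  · right
    exact ⟨⟨a, ha⟩, by rw [unitVec_eq_myE a ha, unitVec_eq_zero b hb, add_zero]⟩
  · right
    exact ⟨⟨b, hb⟩, by rw [unitVec_eq_myE b hb, unitVec_eq_zero a ha, zero_add]⟩
  · exfalso
    have := a.isLt; have := b.isLt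
    exact hab (Fin.ext (by omega))

lemma myE_ne_zero (p : Fin (n - 1)) : myE n p ≠ 0 := by
  intro h
  have := congrFun h p
  simp [myE] at this

lemma PV_nonzero {x : Fin (n - 1) → ZMod 2} (h : PV n x) : x ≠ 0 := by
  rcases h with ⟨p, q, hpq, rfl⟩ | ⟨p, rfl⟩
  · intro h
    have := congrFun h p
    simp [myE, Pi.add_apply, hpq] at this
  · exact myE_ne_zero p

lemma unitVec_castLE (h1 : n - 1 ≤ n) (p : Fin (n - 1)) :
    unitVec n (Fin.castLE h1 p) = myE n p := by
  funext t; simp [unitVec, myE, Fin.ext_iff]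

lemma PV_lift (hn : 5 ≤ n) {x : Fin (n - 1) → ZMod 2} (h : PV n x) :
    ∃ a b : Fin n, a ≠ b ∧ x = unitVec n a + unitVec n b := by
  have h1 : n - 1 ≤ n := Nat.sub_le _ _
  rcases h with ⟨p, q, hpq, rfl⟩ | ⟨p, rfl⟩
  · refine ⟨Fin.castLE h1 p, Fin.castLE h1 q, ?_, ?_⟩
    · simp only [ne_eq, Fin.ext_iff, Fin.coe_castLE]
      exact fun hc => hpq (Fin.ext hc)
    · rw [unitVec_castLE h1 p, unitVec_castLE h1 q]
  · refine ⟨Fin.castLE h1 p, ⟨n - 1, by omega⟩, ?_, ?_⟩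
    · simp only [ne_eq, Fin.ext_iff, Fin.coe_castLE]
      have := p.isLt; omega
    · rw [unitVec_castLE h1 p, unitVec_eq_zero _ (by simp), add_zero]

lemma rel_mem (π : Setoid (Fin n)) {a b : Fin n} (h : π.r a b) :
    unitVec n a + unitVec n b ∈ partSubspace n π := by
  rcases lt_trichotomy a b with hab | rfl | hab
  · exact Submodule.subset_span ⟨a, b, hab, h, rfl⟩
  · rw [addSelf]; exact zero_mem _
  · rw [add_comm]
    exact Submodule.subset_span ⟨b, a, hab, π.symm' h, rfl⟩

lemma partSubspace_mono {π σ : Setoid (Fin n)} (h : π ≤ σ) :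
    partSubspace n π ≤ partSubspace n σ :=
  Submodule.span_mono (by
    rintro x ⟨a, b, hab, hr, rfl⟩
    exact ⟨a, b, hab, h hr, rfl⟩)

lemma partSubspace_sup (π σ : Setoid (Fin n)) :
    partSubspace n (π ⊔ σ) = partSubspace n π ⊔ partSubspace n σ := by
  have key : ∀ a b : Fin n, (π ⊔ σ).r a b →
      unitVec n a + unitVec n b ∈ partSubspace n π ⊔ partSubspace n σ := by
    intro a b hr
    rw [Setoid.sup_eq_eqvGen] at hr
    have hr' : Relation.EqvGen (fun x y => π.r x y ∨ σ.r x y) a b := hr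
    clear hr
    induction hr' with
    | rel a b h =>
      rcases h with h | h
      · exact Submodule.mem_sup_left (rel_mem π h)
      · exact Submodule.mem_sup_right (rel_mem σ h)
    | refl a => rw [addSelf]; exact zero_mem _
    | symm a b _ ih => rw [add_comm]; exact ih
    | trans a b c _ _ ih1 ih2 =>
      have := add_mem ih1 ih2
      have he : (unitVec n a + unitVec n b) + (unitVec n b + unitVec n c)
          = unitVec n a + unitVec n c := funext fun t => by
        simp only [Pi.add_apply]; exact zB _ _ _
      rwa [he] at this
  apply le_antisymm
  · rw [partSubspace, Submodule.span_le]
    rintro x ⟨a, b, hab, hr, rfl⟩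
    exact key a b hr
  · exact sup_le (partSubspace_mono le_sup_left) (partSubspace_mono le_sup_right)

lemma extract (x y : Fin (n - 1) → ZMod 2) (hx0 : x ≠ 0) (hy0 : y ≠ 0) (hxy : x ≠ y)
    (π : Setoid (Fin n)) (heq : Submodule.span (ZMod 2) {x, y} = partSubspace n π) :
    PV n x ∨ (PV n y ∧ PV n (x + y)) := by
  set G : Set (Fin (n - 1) → ZMod 2) :=
    {v | ∃ a b : Fin n, a < b ∧ π.r a b ∧ v = unitVec n a + unitVec n b} with hG
  have hspan : partSubspace n π = Submodule.span (ZMod 2) G := rfl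
  have hGPV : ∀ g ∈ G, PV n g := by
    rintro g ⟨a, b, hab, _, rfl⟩
    exact PV_of_ne a b hab.ne
  have hGW : ∀ g ∈ G, g = x ∨ g = y ∨ g = x + y := by
    intro g hg
    have hgmem : g ∈ Submodule.span (ZMod 2) {x, y} := by
      rw [heq, hspan]; exact Submodule.subset_span hg
    rw [Submodule.mem_span_pair] at hgmem
    obtain ⟨c, d, hcd⟩ := hgmem
    rcases zmod2_cases c with rfl | rfl <;> rcases zmod2_cases d with rfl | rfl <;>
      simp only [zero_smul, one_smul, zero_add, add_zero] at hcd
    · exact absurd hcd.symm (PV_nonzero (hGPV g hg))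
    · exact Or.inr (Or.inl hcd.symm)
    · exact Or.inl hcd.symm
    · exact Or.inr (Or.inr hcd.symm)
  have hxW : x ∈ Submodule.span (ZMod 2) G := by
    rw [← hspan, ← heq]
    exact Submodule.subset_span (by simp)
  by_cases hxG : x ∈ G
  · exact Or.inl (hGPV x hxG)
  by_cases hyG : y ∈ G
  · by_cases hxyG : x + y ∈ G
    · exact Or.inr ⟨hGPV y hyG, hGPV _ hxyG⟩
    · exfalso
      have hsub : G ⊆ {y} := by
        intro g hg
        rcases hGW g hg with rfl | rfl | rfl
        · exact absurd hg hxG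
        · rfl
        · exact absurd hg hxyG
      have hxs : x ∈ Submodule.span (ZMod 2) ({y} : Set _) := Submodule.span_mono hsub hxW
      rw [Submodule.mem_span_singleton] at hxs
      obtain ⟨c, hc⟩ := hxs
      rcases zmod2_cases c with rfl | rfl
      · rw [zero_smul] at hc; exact hx0 hc.symm
      · rw [one_smul] at hc; exact hxy hc.symm
  · exfalso
    have hsub : G ⊆ {x + y} := by
      intro g hg
      rcases hGW g hg with rfl | rfl | rfl
      · exact absurd hg hxG
      · exact absurd hg hyG
      · rfl
    have hxs : x ∈ Submodule.span (ZMod 2) ({x + y} : Set _) := Submodule.span_mono hsub hxW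
    rw [Submodule.mem_span_singleton] at hxs
    obtain ⟨c, hc⟩ := hxs
    rcases zmod2_cases c with rfl | rfl
    · rw [zero_smul] at hc; exact hx0 hc.symm
    · rw [one_smul] at hc
      exact hy0 (by
        have : x + y = x + 0 := by rw [hc, add_zero]
        exact add_left_cancel this)

lemma pigeon {α : Type*} {p q r x y z w : α} (hxy : x ≠ y) (hxz : x ≠ z) (hxw : x ≠ w)
    (hyz : y ≠ z) (hyw : y ≠ w) (hzw : z ≠ w)
    (hx : x = p ∨ x = q ∨ x = r) (hy : y = p ∨ y = q ∨ y = r)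
    (hz : z = p ∨ z = q ∨ z = r) (hw : w = p ∨ w = q ∨ w = r) : False := by
  rcases hx with rfl | rfl | rfl <;> rcases hy with rfl | rfl | rfl <;>
    rcases hz with rfl | rfl | rfl <;> rcases hw with rfl | rfl | rfl <;> simp_all

lemma split (x y s : Fin (n - 1) → ZMod 2) (hx : PV n x) (hy : PV n y)
    (hs : x + y = s) (h0 : s ≠ 0) (hnPV : ¬ PV n s) :
    (∃ p q r : Fin (n - 1), p ≠ q ∧ p ≠ r ∧ q ≠ r ∧
      (∀ t, s t = 1 ↔ (t = p ∨ t = q ∨ t = r)) ∧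
      ((x = myE n p + myE n q ∧ y = myE n r) ∨ (x = myE n r ∧ y = myE n p + myE n q))) ∨
    (∃ p q r w : Fin (n - 1), p ≠ q ∧ p ≠ r ∧ p ≠ w ∧ q ≠ r ∧ q ≠ w ∧ r ≠ w ∧
      (∀ t, s t = 1 ↔ (t = p ∨ t = q ∨ t = r ∨ t = w)) ∧
      x = myE n p + myE n q ∧ y = myE n r + myE n w) := by
  subst hs
  rcases hx with ⟨p, q, hpq, rfl⟩ | ⟨p, rfl⟩ <;> rcases hy with ⟨r, w, hrw, rfl⟩ | ⟨r, rfl⟩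
  · -- pair + pair
    have hpr : p ≠ r := by
      rintro rfl
      have he : (myE n p + myE n q) + (myE n p + myE n w) = myE n q + myE n w :=
        funext fun t => by simp only [Pi.add_apply]; exact zD _ _ _
      by_cases hqw : q = w
      · subst hqw; exact h0 (he.trans (addSelf _))
      · exact hnPV (Or.inl ⟨q, w, hqw, he⟩)
    have hpw : p ≠ w := by
      rintro rfl
      have he : (myE n p + myE n q) + (myE n r + myE n p) = myE n q + myE n r :=
        funext fun t => by simp only [Pi.add_apply]; exact zF _ _ _
      by_cases hqr : q = r
      · subst hqr; exact h0 (he.trans (addSelf _))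
      · exact hnPV (Or.inl ⟨q, r, hqr, he⟩)
    have hqr : q ≠ r := by
      rintro rfl
      have he : (myE n p + myE n q) + (myE n q + myE n w) = myE n p + myE n w :=
        funext fun t => by simp only [Pi.add_apply]; exact zB _ _ _
      by_cases hpw' : p = w
      · subst hpw'; exact h0 (he.trans (addSelf _))
      · exact hnPV (Or.inl ⟨p, w, hpw', he⟩)
    have hqw : q ≠ w := by
      rintro rfl
      have he : (myE n p + myE n q) + (myE n r + myE n q) = myE n p + myE n r :=
        funext fun t => by simp only [Pi.add_apply]; exact zG _ _ _
      by_cases hpr' : p = r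
      · subst hpr'; exact h0 (he.trans (addSelf _))
      · exact hnPV (Or.inl ⟨p, r, hpr', he⟩)
    refine Or.inr ⟨p, q, r, w, hpq, hpr, hpw, hqr, hqw, hrw, ?_, rfl, rfl⟩
    intro t
    simp only [Pi.add_apply, myE]
    by_cases h1 : t = p <;> by_cases h2 : t = q <;> by_cases h3 : t = r <;>
      by_cases h4 : t = w <;> simp_all
  · -- pair + single
    have hrp : r ≠ p := by
      rintro rfl
      have he : (myE n r + myE n q) + myE n r = myE n q :=
        funext fun t => by simp only [Pi.add_apply]; exact zH _ _
      exact hnPV (Or.inr ⟨q, he⟩)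
    have hrq : r ≠ q := by
      rintro rfl
      have he : (myE n p + myE n r) + myE n r = myE n p :=
        funext fun t => by simp only [Pi.add_apply]; exact zI _ _
      exact hnPV (Or.inr ⟨p, he⟩)
    refine Or.inl ⟨p, q, r, hpq, hrp.symm, hrq.symm, ?_, Or.inl ⟨rfl, rfl⟩⟩
    intro t
    simp only [Pi.add_apply, myE]
    by_cases h1 : t = p <;> by_cases h2 : t = q <;> by_cases h3 : t = r <;> simp_all
  · -- single + pair
    have hpr : p ≠ r := by
      rintro rfl
      have he : myE n p + (myE n p + myE n w) = myE n w :=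
        funext fun t => by simp only [Pi.add_apply]; exact zJ _ _
      exact hnPV (Or.inr ⟨w, he⟩)
    have hpw : p ≠ w := by
      rintro rfl
      have he : myE n p + (myE n r + myE n p) = myE n r :=
        funext fun t => by simp only [Pi.add_apply]; exact zC _ _
      exact hnPV (Or.inr ⟨r, he⟩)
    refine Or.inl ⟨r, w, p, hrw, hpr.symm, hpw.symm, ?_, Or.inr ⟨rfl, rfl⟩⟩
    intro t
    simp only [Pi.add_apply, myE]
    by_cases h1 : t = r <;> by_cases h2 : t = w <;> by_cases h3 : t = p <;> simp_all
  · -- single + single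
    by_cases hpr : p = r
    · subst hpr; exact absurd (addSelf (myE n p)) h0
    · exact absurd (Or.inl ⟨p, r, hpr, rfl⟩) hnPV

lemma badCase (hn : 5 ≤ n) (u : Fin (n - 1) → Fin (n - 1) → ZMod 2)
    (hu1 : LinearIndependent (ZMod 2) u) (i : Fin (n - 1))
    (hb : ∀ k, k ≠ i → PV n (u k) ∧ PV n (u i + u k))
    (hni : ¬ PV n (u i)) : False := by
  have hcard : 4 ≤ n - 1 := by omega
  have hui0 : u i ≠ 0 := hu1.ne_zero i
  have key : ∀ k, u k + (u i + u k) = u i := fun k => funext fun t => by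
    simp only [Pi.add_apply]; exact zC _ _
  have h0' : (0 : ℕ) < n - 1 := by omega
  have h1' : (1 : ℕ) < n - 1 := by omega
  obtain ⟨k0, hk0⟩ : ∃ k0, k0 ≠ i := by
    by_cases hi : i = ⟨0, h0'⟩
    · exact ⟨⟨1, h1'⟩, by simp [hi, Fin.ext_iff]⟩
    · exact ⟨⟨0, h0'⟩, fun hc => hi hc.symm⟩
  obtain ⟨hk0PV, hk0PV'⟩ := hb k0 hk0
  have hfin : ∀ (T : Finset (Fin (n - 1) → ZMod 2)), T.card ≤ 3 →
      (∀ j, u j ∈ Submodule.span (ZMod 2) (T : Set (Fin (n - 1) → ZMod 2))) → False := by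
    intro T hTcard hrange
    have hle := linearIndependent_le_span' u hu1 (T : Set (Fin (n - 1) → ZMod 2))
      (by rintro v ⟨j, rfl⟩; exact hrange j)
    rw [Cardinal.mk_fintype, Fintype.card_fin] at hle
    have : Fintype.card (T : Set (Fin (n - 1) → ZMod 2)) = T.card := Fintype.card_coe T
    rw [this] at hle
    have := Nat.cast_le.mp hle
    omega
  rcases split (u k0) (u i + u k0) (u i) hk0PV hk0PV' (key k0) hui0 hni with
    ⟨p, q, r, hpq, hpr, hqr, hchar, horient⟩ |
    ⟨p, q, r, w, hpq, hpr, hpw, hqr, hqw, hrw, hchar, hx0, hy0⟩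
  · -- type 3 : support of u i is {p, q, r}
    classical
    refine hfin {myE n p, myE n q, myE n r} ?_ ?_
    · have c1 := Finset.card_insert_le (myE n p) ({myE n q, myE n r} : Finset _)
      have c2 := Finset.card_insert_le (myE n q) ({myE n r} : Finset _)
      have c3 : ({myE n r} : Finset (Fin (n - 1) → ZMod 2)).card = 1 := Finset.card_singleton _
      omega
    · have hmem : ∀ z : Fin (n - 1), (z = p ∨ z = q ∨ z = r) →
          myE n z ∈ Submodule.span (ZMod 2)
            (({myE n p, myE n q, myE n r} : Finset _) : Set (Fin (n - 1) → ZMod 2)) := by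
        rintro z (rfl | rfl | rfl) <;> exact Submodule.subset_span (by simp)
      intro j
      by_cases hj : j = i
      · subst hj
        have hui : u j = u k0 + (u j + u k0) := (key k0).symm
        rcases horient with ⟨hh1, hh2⟩ | ⟨hh1, hh2⟩
        · rw [hui, hh2, hh1]
          exact add_mem (add_mem (hmem p (Or.inl rfl)) (hmem q (Or.inr (Or.inl rfl))))
            (hmem r (Or.inr (Or.inr rfl)))
        · rw [hui, hh2, hh1]
          exact add_mem (hmem r (Or.inr (Or.inr rfl)))
            (add_mem (hmem p (Or.inl rfl)) (hmem q (Or.inr (Or.inl rfl))))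
      · obtain ⟨hkPV, hkPV'⟩ := hb j hj
        rcases split (u j) (u i + u j) (u i) hkPV hkPV' (key j) hui0 hni with
          ⟨p', q', r', hpq', hpr', hqr', hchar', horient'⟩ |
          ⟨p', q', r', w', hpq', hpr', hpw', hqr', hqw', hrw', hchar', hx', hy'⟩
        · have m1 : p' = p ∨ p' = q ∨ p' = r := (hchar p').mp ((hchar' p').mpr (Or.inl rfl))
          have m2 : q' = p ∨ q' = q ∨ q' = r := (hchar q').mp ((hchar' q').mpr (Or.inr (Or.inl rfl)))
          have m3 : r' = p ∨ r' = q ∨ r' = r := (hchar r').mp ((hchar' r').mpr (Or.inr (Or.inr rfl)))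
          rcases horient' with ⟨hh1, _⟩ | ⟨hh1, _⟩
          · rw [hh1]; exact add_mem (hmem _ m1) (hmem _ m2)
          · rw [hh1]; exact hmem _ m3
        · exfalso
          have m1 : p' = p ∨ p' = q ∨ p' = r := (hchar p').mp ((hchar' p').mpr (Or.inl rfl))
          have m2 : q' = p ∨ q' = q ∨ q' = r := (hchar q').mp ((hchar' q').mpr (Or.inr (Or.inl rfl)))
          have m3 : r' = p ∨ r' = q ∨ r' = r := (hchar r').mp ((hchar' r').mpr (Or.inr (Or.inr (Or.inl rfl))))
          have m4 : w' = p ∨ w' = q ∨ w' = r := (hchar w').mp ((hchar' w').mpr (Or.inr (Or.inr (Or.inr rfl))))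
          exact pigeon hpq' hpr' hpw' hqr' hqw' hrw' m1 m2 m3 m4
  · -- type 4 : support of u i is {p, q, r, w}
    classical
    refine hfin {myE n p + myE n q, myE n p + myE n r, myE n p + myE n w} ?_ ?_
    · have c1 := Finset.card_insert_le (myE n p + myE n q)
        ({myE n p + myE n r, myE n p + myE n w} : Finset _)
      have c2 := Finset.card_insert_le (myE n p + myE n r) ({myE n p + myE n w} : Finset _)
      have c3 : ({myE n p + myE n w} : Finset (Fin (n - 1) → ZMod 2)).card = 1 :=
        Finset.card_singleton _
      omega
    · set T : Finset (Fin (n - 1) → ZMod 2) :=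
        {myE n p + myE n q, myE n p + myE n r, myE n p + myE n w} with hT
      have hmem1 : ∀ z : Fin (n - 1), (z = p ∨ z = q ∨ z = r ∨ z = w) →
          myE n p + myE n z ∈ Submodule.span (ZMod 2) (T : Set (Fin (n - 1) → ZMod 2)) := by
        rintro z (rfl | rfl | rfl | rfl)
        · rw [addSelf]; exact zero_mem _
        · exact Submodule.subset_span (by simp [hT])
        · exact Submodule.subset_span (by simp [hT])
        · exact Submodule.subset_span (by simp [hT])
      have hmem2 : ∀ a b : Fin (n - 1), (a = p ∨ a = q ∨ a = r ∨ a = w) →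
          (b = p ∨ b = q ∨ b = r ∨ b = w) →
          myE n a + myE n b ∈ Submodule.span (ZMod 2) (T : Set (Fin (n - 1) → ZMod 2)) := by
        intro a b ha hb
        have he : myE n a + myE n b = (myE n p + myE n a) + (myE n p + myE n b) :=
          funext fun t => by simp only [Pi.add_apply]; exact (zD _ _ _).symm
        rw [he]
        exact add_mem (hmem1 a ha) (hmem1 b hb)
      intro j
      by_cases hj : j = i
      · subst hj
        have hui : u j = u k0 + (u j + u k0) := (key k0).symm
        rw [hui, hy0, hx0]
        exact add_mem (hmem2 p q (Or.inl rfl) (Or.inr (Or.inl rfl)))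
          (hmem2 r w (Or.inr (Or.inr (Or.inl rfl))) (Or.inr (Or.inr (Or.inr rfl))))
      · obtain ⟨hkPV, hkPV'⟩ := hb j hj
        rcases split (u j) (u i + u j) (u i) hkPV hkPV' (key j) hui0 hni with
          ⟨p', q', r', hpq', hpr', hqr', hchar', horient'⟩ |
          ⟨p', q', r', w', hpq', hpr', hpw', hqr', hqw', hrw', hchar', hx', hy'⟩
        · exfalso
          have m1 : p = p' ∨ p = q' ∨ p = r' := (hchar' p).mp ((hchar p).mpr (Or.inl rfl))
          have m2 : q = p' ∨ q = q' ∨ q = r' := (hchar' q).mp ((hchar q).mpr (Or.inr (Or.inl rfl)))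
          have m3 : r = p' ∨ r = q' ∨ r = r' := (hchar' r).mp ((hchar r).mpr (Or.inr (Or.inr (Or.inl rfl))))
          have m4 : w = p' ∨ w = q' ∨ w = r' := (hchar' w).mp ((hchar w).mpr (Or.inr (Or.inr (Or.inr rfl))))
          exact pigeon hpq hpr hpw hqr hqw hrw m1 m2 m3 m4
        · have m1 : p' = p ∨ p' = q ∨ p' = r ∨ p' = w :=
            (hchar p').mp ((hchar' p').mpr (Or.inl rfl))
          have m2 : q' = p ∨ q' = q ∨ q' = r ∨ q' = w :=
            (hchar q').mp ((hchar' q').mpr (Or.inr (Or.inl rfl)))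
          rw [hx']
          exact hmem2 p' q' m1 m2

lemma goodCase (hn : 5 ≤ n) (x : Fin (n - 1) → ZMod 2) (hx : PV n x) :
    IsPartitionSubspace n (Submodule.span (ZMod 2) {x}) := by
  obtain ⟨a, b, hab, rfl⟩ := PV_lift hn hx
  refine ⟨⟨fun s t => s = t ∨ (s = a ∧ t = b) ∨ (s = b ∧ t = a),
    ⟨fun s => Or.inl rfl, ?_, ?_⟩⟩, ?_⟩
  · rintro s t (rfl | ⟨rfl, rfl⟩ | ⟨rfl, rfl⟩) <;> tauto
  · rintro s t v h1 h2
    rcases h1 with rfl | ⟨rfl, rfl⟩ | ⟨rfl, rfl⟩ <;>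
      rcases h2 with h2 | ⟨h2a, h2b⟩ | ⟨h2a, h2b⟩ <;> subst_vars <;> tauto
  · have hset : {v | ∃ i j : Fin n, i < j ∧
        (i = j ∨ (i = a ∧ j = b) ∨ (i = b ∧ j = a)) ∧ v = unitVec n i + unitVec n j}
        = ({unitVec n a + unitVec n b} : Set (Fin (n - 1) → ZMod 2)) := by
      ext v
      constructor
      · rintro ⟨s, t, hst, hrel, rfl⟩
        rcases hrel with rfl | ⟨rfl, rfl⟩ | ⟨rfl, rfl⟩
        · exact absurd rfl hst.ne
        · rfl
        · exact Set.mem_singleton_iff.mpr (add_comm _ _)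
      · rintro rfl
        rcases lt_trichotomy a b with hab' | hab' | hab'
        · exact ⟨a, b, hab', Or.inr (Or.inl ⟨rfl, rfl⟩), rfl⟩
        · exact absurd hab' hab
        · exact ⟨b, a, hab', Or.inr (Or.inr ⟨rfl, rfl⟩), add_comm _ _⟩
    rw [partSubspace]
    rw [show ({x | ∃ i j : Fin n, i < j ∧ @Setoid.r _
        ⟨fun s t => s = t ∨ (s = a ∧ t = b) ∨ (s = b ∧ t = a), _⟩ i j ∧
        x = unitVec n i + unitVec n j} : Set (Fin (n - 1) → ZMod 2)) = _ from hset]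

end LinkProof

/-- Link Property for partitions: let `n ≥ 5`, let `u₁, …, u_{n-1}` be a basis of
`𝔽₂ⁿ⁻¹` and let `U` be the span of `{uᵢ : i ∈ S}` for a proper nonempty subset
`S`.  If for every proper nonempty `S'` comparable to (and distinct from) `S` the
subspace spanned by `{uᵢ : i ∈ S'}` is a partition subspace, then so is `U`. -/
theorem linkProperty_partition (n : ℕ) (hn : 5 ≤ n)
    (u : Fin (n - 1) → Fin (n - 1) → ZMod 2)
    (hu1 : LinearIndependent (ZMod 2) u)
    (hu2 : Submodule.span (ZMod 2) (Set.range u) = ⊤)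
    (S : Set (Fin (n - 1))) (hS1 : S ≠ ∅) (hS2 : S ≠ Set.univ)
    (h : ∀ S' : Set (Fin (n - 1)), S' ≠ ∅ → S' ≠ Set.univ → S' ≠ S →
      S' ⊂ S ∨ S ⊂ S' →
      IsPartitionSubspace n (Submodule.span (ZMod 2) (u '' S'))) :
    IsPartitionSubspace n (Submodule.span (ZMod 2) (u '' S)) := by
  classical
  by_cases hsing : ∃ j k, j ∈ S ∧ k ∈ S ∧ j ≠ k
  · -- |S| ≥ 2 : use the two subsets S \ {j}, S \ {k}
    obtain ⟨j, k, hj, hk, hjk⟩ := hsing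
    have getH : ∀ m m' : Fin (n - 1), m ∈ S → m' ∈ S → m' ≠ m →
        IsPartitionSubspace n (Submodule.span (ZMod 2) (u '' (S \ {m}))) := by
      intro m m' hm hm' hmm
      refine h (S \ {m}) ?_ ?_ ?_ (Or.inl ?_)
      · intro hEq
        have : m' ∈ S \ {m} := ⟨hm', hmm⟩
        rw [hEq] at this
        exact this
      · intro hEq
        have : m ∈ S \ {m} := hEq.symm ▸ Set.mem_univ m
        exact this.2 rfl
      · intro hEq
        have : m ∈ S \ {m} := hEq.symm ▸ hm
        exact this.2 rfl
      · exact ⟨Set.diff_subset, fun hc => (hc hm).2 rfl⟩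
    obtain ⟨π1, hπ1⟩ := getH j k hj hk (fun hc => hjk hc.symm)
    obtain ⟨π2, hπ2⟩ := getH k j hk hj hjk
    refine ⟨π1 ⊔ π2, ?_⟩
    have himg : S = (S \ {j}) ∪ (S \ {k}) := by
      ext t
      by_cases h1 : t = j <;> by_cases h2 : t = k <;> simp [h1, h2] <;> simp_all
    rw [himg, Set.image_union, Submodule.span_union, hπ1, hπ2,
      LinkProof.partSubspace_sup]
  · -- S = {i}
    push_neg at hsing
    obtain ⟨i, hi⟩ := Set.nonempty_iff_ne_empty.mpr hS1
    have hSi : S = {i} := Set.eq_singleton_iff_unique_mem.mpr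
      ⟨hi, fun x hx => hsing x i hx hi⟩
    subst hSi
    rw [Set.image_singleton]
    by_cases hPV : LinkProof.PV n (u i)
    · exact LinkProof.goodCase hn _ hPV
    · exfalso
      refine LinkProof.badCase hn u hu1 i ?_ hPV
      intro k hk
      obtain ⟨m, hmi, hmk⟩ : ∃ m : Fin (n - 1), m ≠ i ∧ m ≠ k := by
        by_contra hcon
        push_neg at hcon
        have huniv : (Finset.univ : Finset (Fin (n - 1))) ⊆ {i, k} := by
          intro m _
          by_cases hm : m = i
          · simp [hm]
          · simp [hcon m hm]
        have hc1 := Finset.card_le_card huniv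
        have hc2 := Finset.card_insert_le i ({k} : Finset (Fin (n - 1)))
        have hc3 : ({k} : Finset (Fin (n - 1))).card = 1 := Finset.card_singleton _
        have hc4 : (Finset.univ : Finset (Fin (n - 1))).card = n - 1 := by
          simp [Finset.card_univ]
        omega
      have happ := h {i, k} (Set.insert_nonempty i {k}).ne_empty
        (by
          intro hEq
          have : m ∈ ({i, k} : Set (Fin (n - 1))) := hEq.symm ▸ Set.mem_univ m
          rcases this with rfl | rfl
          · exact hmi rfl
          · exact hmk rfl)
        (by
          intro hEq
          have : k ∈ ({i} : Set (Fin (n - 1))) := hEq ▸ (by simp : k ∈ ({i, k} : Set _))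
          exact hk this)
        (Or.inr ⟨by simp, by
          intro hc
          have : k ∈ ({i} : Set (Fin (n - 1))) := hc (by simp : k ∈ ({i, k} : Set _))
          exact hk this⟩)
      obtain ⟨π, hπ⟩ := happ
      rw [Set.image_pair] at hπ
      rcases LinkProof.extract (u i) (u k) (hu1.ne_zero i) (hu1.ne_zero k)
        (fun hEq => hk (hu1.injective hEq).symm) π hπ with hPVi | hPair
      · exact absurd hPVi hPV
      · exact hPair
end
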